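/- arXiv:2210.02911 — 15 statements merged into one kernel-verified Lean document; each statement's English description precedes it below -/
import Mathlib

section
/- Suppose {u, v} is a PFSS of (r z')' = q z on ℝ, and let ρ = u·v. Then ∫_{-∞}^0 dt/(r(t)ρ(t)) = ∞ and ∫_0^∞ dt/(r(t)ρ(t)) = ∞. -/
open MeasureTheory Filter Set intervalIntegral

def IsSol (r q z : ℝ → ℝ) : Prop :=
  Differentiable ℝ z ∧ Differentiable ℝ (fun x => r x * deriv z x) ∧
    ∀ x, deriv (fun y => r y * deriv z y) x = q x * z x

def IsPFSS (r q u v : ℝ → ℝ) : Prop :=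
  IsSol r q u ∧ IsSol r q v ∧
  (∀ x, 0 < u x) ∧ (∀ x, 0 < v x) ∧
  (∀ x, deriv u x ≤ 0) ∧ (∀ x, 0 ≤ deriv v x) ∧
  (∀ x, r x * (deriv v x * u x - deriv u x * v x) = 1) ∧
  Tendsto (fun x => u x / v x) atTop (nhds 0) ∧
  Tendsto (fun x => v x / u x) atBot (nhds 0)

theorem stmt1 (r q u v : ℝ → ℝ) (h : IsPFSS r q u v)
    (ρ : ℝ → ℝ) (hρ : ∀ x, ρ x = u x * v x) :
    ¬ IntegrableOn (fun t => 1 / (r t * ρ t)) (Iic 0) ∧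
    ¬ IntegrableOn (fun t => 1 / (r t * ρ t)) (Ioi 0) := by
  obtain ⟨hu, hv, hup, hvp, hu', hv', hW, htop, hbot⟩ := h
  have hr0 : ∀ x, r x ≠ 0 := by
    intro x h0
    have := hW x; rw [h0, zero_mul] at this; norm_num at this
  have hrρ : ∀ x, 0 < r x * ρ x := by
    intro x
    have hWnn : 0 ≤ deriv v x * u x - deriv u x * v x := by
      have h1 := mul_nonneg (hv' x) (hup x).le
      have h2 := mul_nonpos_of_nonpos_of_nonneg (hu' x) (hvp x).le
      linarith
    have hrpos : 0 < r x := by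
      rcases (hr0 x).lt_or_gt with hlt | hgt
      · exfalso; nlinarith [hW x]
      · exact hgt
    rw [hρ x]
    exact mul_pos hrpos (mul_pos (hup x) (hvp x))
  have hnn : ∀ x, (0:ℝ) ≤ 1 / (r x * ρ x) := fun x => div_nonneg zero_le_one (hrρ x).le
  have hkeyf : ∀ x, HasDerivAt (fun y => Real.log (v y / u y)) (1/(r x * ρ x)) x := by
    intro x
    have hdiv := ((hv.1 x).hasDerivAt.div (hu.1 x).hasDerivAt (ne_of_gt (hup x)))
    have hlog := hdiv.log (div_ne_zero (ne_of_gt (hvp x)) (ne_of_gt (hup x)))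
    have hW' : deriv v x * u x - v x * deriv u x = 1 / r x := by
      rw [eq_div_iff (hr0 x)]; linear_combination hW x
    convert hlog using 1
    case e'_8 => rfl
    rw [hρ, hW']
    simp only [Pi.div_apply]
    field_simp [(hup x).ne', (hvp x).ne', hr0 x]
  have hkeyg : ∀ x, HasDerivAt (fun y => Real.log (u y / v y)) (-(1/(r x * ρ x))) x := by
    intro x
    have hdiv := ((hu.1 x).hasDerivAt.div (hv.1 x).hasDerivAt (ne_of_gt (hvp x)))
    have hlog := hdiv.log (div_ne_zero (ne_of_gt (hup x)) (ne_of_gt (hvp x)))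
    have hW' : deriv u x * v x - u x * deriv v x = -(1 / r x) := by
      field_simp [hr0 x]; linear_combination -hW x
    convert hlog using 1
    case e'_8 => rfl
    rw [hρ, hW']
    simp only [Pi.div_apply]
    field_simp [(hup x).ne', (hvp x).ne', hr0 x]
  -- v/u → atTop at top, u/v → atTop at bot
  have hvu_top : Tendsto (fun x => Real.log (v x / u x)) atTop atTop := by
    have h1 : Tendsto (fun x => u x / v x) atTop (nhdsWithin 0 (Ioi 0)) := by
      refine tendsto_nhdsWithin_of_tendsto_nhds_of_eventually_within _ htop ?_
      exact Eventually.of_forall fun x => div_pos (hup x) (hvp x)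
    have h2 : Tendsto (fun x => (u x / v x)⁻¹) atTop atTop := h1.inv_tendsto_nhdsGT_zero
    have h3 : Tendsto (fun x => v x / u x) atTop atTop := by
      refine h2.congr fun x => ?_
      rw [inv_div]
    exact Real.tendsto_log_atTop.comp h3
  have huv_bot : Tendsto (fun x => Real.log (u x / v x)) atBot atTop := by
    have h1 : Tendsto (fun x => v x / u x) atBot (nhdsWithin 0 (Ioi 0)) := by
      refine tendsto_nhdsWithin_of_tendsto_nhds_of_eventually_within _ hbot ?_
      exact Eventually.of_forall fun x => div_pos (hvp x) (hup x)
    have h2 : Tendsto (fun x => (v x / u x)⁻¹) atBot atTop := h1.inv_tendsto_nhdsGT_zero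
    have h3 : Tendsto (fun x => u x / v x) atBot atTop := by
      refine h2.congr fun x => ?_
      rw [inv_div]
    exact Real.tendsto_log_atTop.comp h3
  constructor
  · intro hint
    set C := ∫ t in Iic (0:ℝ), 1 / (r t * ρ t)
    have hbound : ∀ x ≤ (0:ℝ), Real.log (u x / v x) ≤ Real.log (u 0 / v 0) + C := by
      intro x hx
      have hii : IntervalIntegrable (fun t => -(1 / (r t * ρ t))) volume 0 x := by
        have : IntegrableOn (fun t => 1 / (r t * ρ t)) (Ioc x 0) :=
          hint.mono_set (Ioc_subset_Iic_self)
        have h4 : IntervalIntegrable (fun t => 1 / (r t * ρ t)) volume x 0 :=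
          (intervalIntegrable_iff_integrableOn_Ioc_of_le hx).mpr this
        exact h4.symm.neg
      have hftc := intervalIntegral.integral_eq_sub_of_hasDerivAt
        (fun t _ => hkeyg t) hii
      have h5 : Real.log (u x / v x) - Real.log (u 0 / v 0)
          = ∫ t in x..0, 1 / (r t * ρ t) := by
        rw [intervalIntegral.integral_symm] at hftc
        rw [intervalIntegral.integral_neg] at hftc
        linarith [hftc]
      have h6 : (∫ t in x..0, 1 / (r t * ρ t)) ≤ C := by
        rw [intervalIntegral.integral_of_le hx]
        exact setIntegral_mono_set hint (Eventually.of_forall hnn)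
          (Ioc_subset_Iic_self).eventuallyLE
      linarith
    obtain ⟨x, hx1, hx2⟩ :=
      ((huv_bot.eventually_gt_atTop (Real.log (u 0 / v 0) + C)).and
        (eventually_le_atBot (0:ℝ))).exists
    exact absurd (hbound x hx2) (not_le.mpr hx1)
  · intro hint
    set C := ∫ t in Ioi (0:ℝ), 1 / (r t * ρ t)
    have hbound : ∀ x, (0:ℝ) ≤ x → Real.log (v x / u x) ≤ Real.log (v 0 / u 0) + C := by
      intro x hx
      have hii : IntervalIntegrable (fun t => 1 / (r t * ρ t)) volume 0 x := by
        have : IntegrableOn (fun t => 1 / (r t * ρ t)) (Ioc 0 x) :=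
          hint.mono_set (Ioc_subset_Ioi_self)
        exact (intervalIntegrable_iff_integrableOn_Ioc_of_le hx).mpr this
      have hftc := intervalIntegral.integral_eq_sub_of_hasDerivAt
        (fun t _ => hkeyf t) hii
      have h6 : (∫ t in (0:ℝ)..x, 1 / (r t * ρ t)) ≤ C := by
        rw [intervalIntegral.integral_of_le hx]
        exact setIntegral_mono_set hint (Eventually.of_forall hnn)
          (Ioc_subset_Ioi_self).eventuallyLE
      linarith [hftc]
    obtain ⟨x, hx1, hx2⟩ :=
      ((hvu_top.eventually_gt_atTop (Real.log (v 0 / u 0) + C)).and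
        (eventually_ge_atTop (0:ℝ))).exists
    exact absurd (hbound x hx2) (not_le.mpr hx1)
end

section
/- Suppose {u, v} is a PFSS of (r z')' = q z on ℝ. Then for all x ∈ ℝ: u(x) = v(x) ∫_x^∞ dt/(r(t) v(t)²) and v(x) = u(x) ∫_{-∞}^x dt/(r(t) u(t)²). -/
open MeasureTheory Filter Set intervalIntegral

lemma integrableOn_Iic_comp_neg {f : ℝ → ℝ} {c : ℝ}
    (h : IntegrableOn (fun t => f (-t)) (Ioi (-c))) : IntegrableOn f (Iic c) := by
  have A : MeasurableEmbedding fun x : ℝ => -x :=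
    (Homeomorph.neg ℝ).isClosedEmbedding.measurableEmbedding
  have h1 := (A.integrableOn_map_iff (f := f) (s := Iic c) (μ := volume))
  rw [Measure.map_neg_eq_self (volume : Measure ℝ)] at h1
  rw [h1]
  have h2 : (fun x : ℝ => -x) ⁻¹' (Iic c) = Ici (-c) := by ext t; simp [neg_le]
  rw [h2]
  exact (integrableOn_Ici_iff_integrableOn_Ioi).2 h

theorem stmt2 (r q u v : ℝ → ℝ) (h : IsPFSS r q u v) :
    ∀ x : ℝ, IntegrableOn (fun t => 1 / (r t * v t ^ 2)) (Ioi x) ∧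
      IntegrableOn (fun t => 1 / (r t * u t ^ 2)) (Iic x) ∧
      u x = v x * ∫ t in Ioi x, 1 / (r t * v t ^ 2) ∧
      v x = u x * ∫ t in Iic x, 1 / (r t * u t ^ 2) := by
  obtain ⟨hu, hv, hup, hvp, hud, hvd, hw, htop, hbot⟩ := h
  have hrpos : ∀ t, 0 < r t := by
    intro t
    have hW : 0 ≤ deriv v t * u t - deriv u t * v t := by
      nlinarith [mul_nonneg (hvd t) (hup t).le,
        mul_nonneg (neg_nonneg.2 (hud t)) (hvp t).le]
    by_contra hle
    push_neg at hle
    nlinarith [hw t, mul_nonneg (neg_nonneg.2 hle) hW]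
  -- derivative of u/v
  have hgderiv : ∀ t, HasDerivAt (fun y => u y / v y) (-(1 / (r t * v t ^ 2))) t := by
    intro t
    have h1 : HasDerivAt (fun y => u y / v y) ((deriv u t * v t - u t * deriv v t) / v t ^ 2) t :=
      (hu.1 t).hasDerivAt.div (hv.1 t).hasDerivAt (hvp t).ne'
    convert h1 using 1
    have hr := (hrpos t).ne'
    have hvt := (hvp t).ne'
    field_simp
    nlinarith [hw t]
  -- derivative of v/u
  have hhderiv : ∀ t, HasDerivAt (fun y => v y / u y) (1 / (r t * u t ^ 2)) t := by
    intro t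
    have h1 : HasDerivAt (fun y => v y / u y) ((deriv v t * u t - v t * deriv u t) / u t ^ 2) t :=
      (hv.1 t).hasDerivAt.div (hu.1 t).hasDerivAt (hup t).ne'
    convert h1 using 1
    have hr := (hrpos t).ne'
    have hut := (hup t).ne'
    field_simp
    nlinarith [hw t]
  intro x
  have hpos : ∀ t, 0 < 1 / (r t * v t ^ 2) := fun t => div_pos one_pos (mul_pos (hrpos t) (pow_pos (hvp t) 2))
  have hposu : ∀ t, 0 < 1 / (r t * u t ^ 2) := fun t => div_pos one_pos (mul_pos (hrpos t) (pow_pos (hup t) 2))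
  -- Ioi part
  have hint1 : IntegrableOn (fun t => -(1 / (r t * v t ^ 2))) (Ioi x) :=
    integrableOn_Ioi_deriv_of_nonpos' (fun t _ => hgderiv t)
      (fun t _ => by linarith [hpos t]) htop
  have hI1 : IntegrableOn (fun t => 1 / (r t * v t ^ 2)) (Ioi x) := by
    simpa only [Pi.neg_def, neg_neg] using hint1.neg
  have hval1 : ∫ t in Ioi x, -(1 / (r t * v t ^ 2)) = 0 - u x / v x :=
    integral_Ioi_of_hasDerivAt_of_nonpos' (fun t _ => hgderiv t)
      (fun t _ => by linarith [hpos t]) htop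
  have hval1' : ∫ t in Ioi x, 1 / (r t * v t ^ 2) = u x / v x := by
    rw [MeasureTheory.integral_neg] at hval1
    linarith
  -- Iic part via reflection
  have hGderiv : ∀ t : ℝ, HasDerivAt (fun s => v (-s) / u (-s))
      (-(1 / (r (-t) * u (-t) ^ 2))) t := by
    intro t
    have h1 : HasDerivAt (fun s => v (-s) / u (-s)) (1 / (r (-t) * u (-t) ^ 2) * -1) t :=
      (hhderiv (-t)).comp t (hasDerivAt_neg t)
    simpa [mul_comm] using h1
  have hGtop : Tendsto (fun s => v (-s) / u (-s)) atTop (nhds 0) :=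
    hbot.comp tendsto_neg_atTop_atBot
  have hint2 : IntegrableOn (fun t => -(1 / (r (-t) * u (-t) ^ 2))) (Ioi (-x)) :=
    integrableOn_Ioi_deriv_of_nonpos' (fun t _ => hGderiv t)
      (fun t _ => by linarith [hposu (-t)]) hGtop
  have hI2' : IntegrableOn (fun t => 1 / (r (-t) * u (-t) ^ 2)) (Ioi (-x)) := by
    simpa only [Pi.neg_def, neg_neg] using hint2.neg
  have hI2 : IntegrableOn (fun t => 1 / (r t * u t ^ 2)) (Iic x) :=
    integrableOn_Iic_comp_neg hI2'
  have hval2 : ∫ t in Ioi (-x), -(1 / (r (-t) * u (-t) ^ 2)) = 0 - v (- -x) / u (- -x) :=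
    integral_Ioi_of_hasDerivAt_of_nonpos' (fun t _ => hGderiv t)
      (fun t _ => by linarith [hposu (-t)]) hGtop
  have hval2' : ∫ t in Iic x, 1 / (r t * u t ^ 2) = v x / u x := by
    have hc := integral_comp_neg_Ioi (-x) (fun t => 1 / (r t * u t ^ 2))
    rw [MeasureTheory.integral_neg] at hval2
    simp only [neg_neg] at hval2 hc
    rw [← hc]
    linarith
  refine ⟨hI1, hI2, ?_, ?_⟩
  · rw [hval1', mul_comm, div_mul_cancel₀ _ (hvp x).ne']
  · rw [hval2', mul_comm, div_mul_cancel₀ _ (hup x).ne']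
end

section
/- Suppose {u, v} is a PFSS of (r z')' = q z on ℝ. Then ∫_{-∞}^0 dt/(r(t)u(t)²) < ∞, ∫_0^∞ dt/(r(t)v(t)²) < ∞, while ∫_{-∞}^0 dt/(r(t)v(t)²) = ∞ and ∫_0^∞ dt/(r(t)u(t)²) = ∞. -/
open MeasureTheory Filter Set intervalIntegral

/-- FTC for everywhere-differentiable `f` with nonnegative derivative `g`. -/
lemma key_int (f g : ℝ → ℝ) (hfg : ∀ x, HasDerivAt f (g x) x) (hg : ∀ x, 0 ≤ g x)
    (a b : ℝ) :
    IntervalIntegrable g MeasureTheory.volume a b ∧ ∫ x in a..b, g x = f b - f a := by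
  have hdiff : Differentiable ℝ f := fun x => (hfg x).differentiableAt
  have hii : IntervalIntegrable g MeasureTheory.volume a b :=
    intervalIntegrable_deriv_of_nonneg hdiff.continuous.continuousOn
      (fun x _ => hfg x) (fun x _ => hg x)
  exact ⟨hii, integral_eq_sub_of_hasDerivAt (fun x _ => hfg x) hii⟩

lemma int_norm_eq (g : ℝ → ℝ) (hg : ∀ x, 0 ≤ g x) (a b : ℝ) :
    (∫ x in a..b, ‖g x‖) = ∫ x in a..b, g x := by
  apply intervalIntegral.integral_congr
  intro x _
  exact Real.norm_of_nonneg (hg x)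

lemma int_Iic (f g : ℝ → ℝ) (hfg : ∀ x, HasDerivAt f (g x) x) (hg : ∀ x, 0 ≤ g x)
    (C : ℝ) (hC : ∀ x, f 0 - f x ≤ C) : IntegrableOn g (Iic 0) := by
  apply integrableOn_Iic_of_intervalIntegral_norm_bounded (f := g) (a := fun n : ℕ => -(n : ℝ))
    C 0 (l := atTop)
  · intro i
    exact (key_int f g hfg hg (-(i : ℝ)) 0).1.1
  · exact tendsto_neg_atBot_iff.2 tendsto_natCast_atTop_atTop
  · filter_upwards with i
    rw [int_norm_eq g hg, (key_int f g hfg hg (-(i : ℝ)) 0).2]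
    exact hC _

lemma int_Ioi (f g : ℝ → ℝ) (hfg : ∀ x, HasDerivAt f (g x) x) (hg : ∀ x, 0 ≤ g x)
    (C : ℝ) (hC : ∀ x, f x - f 0 ≤ C) : IntegrableOn g (Ioi 0) := by
  apply integrableOn_Ioi_of_intervalIntegral_norm_bounded (f := g) (b := fun n : ℕ => (n : ℝ))
    C 0 (l := atTop)
  · intro i
    exact (key_int f g hfg hg 0 (i : ℝ)).1.1
  · exact tendsto_natCast_atTop_atTop
  · filter_upwards with i
    rw [int_norm_eq g hg, (key_int f g hfg hg 0 (i : ℝ)).2]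
    exact hC _

lemma notint_Ioi (f g : ℝ → ℝ) (hfg : ∀ x, HasDerivAt f (g x) x) (hg : ∀ x, 0 ≤ g x)
    (htop : Tendsto f atTop atTop) : ¬ IntegrableOn g (Ioi 0) := by
  intro hI
  set I := ∫ x in Ioi (0 : ℝ), g x with hIdef
  have hbd : ∀ b : ℝ, 0 ≤ b → f b ≤ f 0 + I := by
    intro b hb
    have h1 : (∫ x in Ioc (0:ℝ) b, g x) ≤ I := by
      apply setIntegral_mono_set hI
      · filter_upwards with x using hg x
      · exact HasSubset.Subset.eventuallyLE Ioc_subset_Ioi_self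
    have h2 : (∫ x in Ioc (0:ℝ) b, g x) = f b - f 0 := by
      rw [← intervalIntegral.integral_of_le hb, (key_int f g hfg hg 0 b).2]
    linarith [h1, h2.symm.le, h2.le]
  obtain ⟨b, hb1, hb2⟩ := ((htop.eventually (eventually_gt_atTop (f 0 + I))).and
    (eventually_ge_atTop (0:ℝ))).exists
  exact absurd (hbd b hb2) (not_le.2 hb1)

lemma notint_Iic (f g : ℝ → ℝ) (hfg : ∀ x, HasDerivAt f (g x) x) (hg : ∀ x, 0 ≤ g x)
    (hbot : Tendsto f atBot atBot) : ¬ IntegrableOn g (Iic 0) := by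
  intro hI
  set I := ∫ x in Iic (0 : ℝ), g x with hIdef
  have hbd : ∀ a : ℝ, a ≤ 0 → f 0 - I ≤ f a := by
    intro a ha
    have h1 : (∫ x in Ioc a 0, g x) ≤ I := by
      apply setIntegral_mono_set hI
      · filter_upwards with x using hg x
      · exact HasSubset.Subset.eventuallyLE Ioc_subset_Iic_self
    have h2 : (∫ x in Ioc a 0, g x) = f 0 - f a := by
      rw [← intervalIntegral.integral_of_le ha, (key_int f g hfg hg a 0).2]
    linarith
  obtain ⟨a, ha1, ha2⟩ := ((hbot.eventually (eventually_lt_atBot (f 0 - I))).and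
    (eventually_le_atBot (0:ℝ))).exists
  exact absurd (hbd a ha2) (not_le.2 ha1)

theorem stmt3 (r q u v : ℝ → ℝ) (h : IsPFSS r q u v) :
    IntegrableOn (fun t => 1 / (r t * u t ^ 2)) (Iic 0) ∧
    IntegrableOn (fun t => 1 / (r t * v t ^ 2)) (Ioi 0) ∧
    ¬ IntegrableOn (fun t => 1 / (r t * v t ^ 2)) (Iic 0) ∧
    ¬ IntegrableOn (fun t => 1 / (r t * u t ^ 2)) (Ioi 0) := by
  obtain ⟨hu, hv, hu0, hv0, hu', hv', hW, htop, hbot⟩ := h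
  have hWpos : ∀ x, 0 < deriv v x * u x - deriv u x * v x := by
    intro x
    have h1 : 0 ≤ deriv v x * u x - deriv u x * v x := by
      have h2 := mul_nonneg (hv' x) (hu0 x).le
      have h3 := mul_nonpos_of_nonpos_of_nonneg (hu' x) (hv0 x).le
      linarith
    rcases h1.lt_or_eq with h2 | h2
    · exact h2
    · exfalso; have h3 := hW x; rw [← h2, mul_zero] at h3; exact one_ne_zero h3.symm
  have hr : ∀ x, 0 < r x := by
    intro x
    nlinarith [hW x, hWpos x]
  have hgpos : ∀ x, 0 ≤ 1 / (r x * u x ^ 2) := fun x =>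
    le_of_lt (by have := hr x; have := hu0 x; positivity)
  have hg2pos : ∀ x, 0 ≤ 1 / (r x * v x ^ 2) := fun x =>
    le_of_lt (by have := hr x; have := hv0 x; positivity)
  have hdf : ∀ x, HasDerivAt (fun y => v y / u y) (1 / (r x * u x ^ 2)) x := by
    intro x
    have hd := ((hv.1 x).hasDerivAt.div (hu.1 x).hasDerivAt (ne_of_gt (hu0 x)))
    refine HasDerivAt.congr_deriv hd ?_
    have hrx := (hr x).ne'
    have hux := (hu0 x).ne'
    field_simp
    nlinarith [hW x]
  have hdf2 : ∀ x, HasDerivAt (fun y => -(u y / v y)) (1 / (r x * v x ^ 2)) x := by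
    intro x
    have hd := ((hu.1 x).hasDerivAt.div (hv.1 x).hasDerivAt (ne_of_gt (hv0 x))).neg
    refine HasDerivAt.congr_deriv hd ?_
    have hrx := (hr x).ne'
    have hvx := (hv0 x).ne'
    field_simp
    nlinarith [hW x]
  have hftop : Tendsto (fun x => v x / u x) atTop atTop := by
    have h1 : Tendsto (fun x => u x / v x) atTop (nhdsWithin 0 (Ioi 0)) :=
      tendsto_nhdsWithin_of_tendsto_nhds_of_eventually_within _ htop
        (Eventually.of_forall fun x => div_pos (hu0 x) (hv0 x))
    have h2 := h1.inv_tendsto_nhdsGT_zero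
    exact h2.congr fun x => by simp [inv_div]
  have hfbot : Tendsto (fun x => -(u x / v x)) atBot atBot := by
    have h1 : Tendsto (fun x => v x / u x) atBot (nhdsWithin 0 (Ioi 0)) :=
      tendsto_nhdsWithin_of_tendsto_nhds_of_eventually_within _ hbot
        (Eventually.of_forall fun x => div_pos (hv0 x) (hu0 x))
    have h2 := h1.inv_tendsto_nhdsGT_zero
    have h3 : Tendsto (fun x => u x / v x) atBot atTop := h2.congr fun x => by simp [inv_div]
    exact tendsto_neg_atBot_iff.2 h3
  refine ⟨?_, ?_, ?_, ?_⟩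
  · exact int_Iic _ _ hdf hgpos (v 0 / u 0) fun x => by
      have := div_pos (hv0 x) (hu0 x); linarith
  · exact int_Ioi _ _ hdf2 hg2pos (u 0 / v 0) fun x => by
      have := div_pos (hu0 x) (hv0 x); linarith
  · exact notint_Iic _ _ hdf2 hg2pos hfbot
  · exact notint_Ioi _ _ hdf hgpos hftop
end

section
/- Suppose the equation (r z')' = q z on ℝ has a PFSS {u, v}, and {u₁, v₁} is another PFSS of the same equation. Then there exists a constant α > 0 such that u₁ = α u and v₁ = α⁻¹ v. -/
open MeasureTheory Filter Set intervalIntegral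

/-- The (weighted) Wronskian of two solutions is constant. -/
lemma wronskian_const (r q f g : ℝ → ℝ) (hf : IsSol r q f) (hg : IsSol r q g) :
    ∀ x y : ℝ, r x * (deriv f x * g x - f x * deriv g x)
      = r y * (deriv f y * g y - f y * deriv g y) := by
  obtain ⟨hfd, hFd, hF⟩ := hf
  obtain ⟨hgd, hGd, hG⟩ := hg
  set W : ℝ → ℝ := fun x => (r x * deriv f x) * g x - f x * (r x * deriv g x) with hW
  have hWd : ∀ x, HasDerivAt W 0 x := by
    intro x
    have h1 : HasDerivAt (fun y => (r y * deriv f y) * g y)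
        ((q x * f x) * g x + (r x * deriv f x) * deriv g x) x := by
      have := ((hFd x).hasDerivAt.mul (hgd x).hasDerivAt)
      rwa [hF x] at this
    have h2 : HasDerivAt (fun y => f y * (r y * deriv g y))
        (deriv f x * (r x * deriv g x) + f x * (q x * g x)) x := by
      have := ((hfd x).hasDerivAt.mul (hGd x).hasDerivAt)
      rwa [hG x] at this
    have h3 := h1.sub h2
    have : (q x * f x) * g x + (r x * deriv f x) * deriv g x
        - (deriv f x * (r x * deriv g x) + f x * (q x * g x)) = 0 := by ring
    rw [this] at h3
    exact h3
  have hconst : ∀ x y, W x = W y := by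
    intro x y
    have hWdiff : Differentiable ℝ W := fun x => (hWd x).differentiableAt
    have hW0 : ∀ x, deriv W x = 0 := fun x => (hWd x).deriv
    exact is_const_of_deriv_eq_zero hWdiff hW0 x y
  intro x y
  have := hconst x y
  simp only [hW] at this
  linarith [this]

theorem stmt4 (r q u v u₁ v₁ : ℝ → ℝ) (h : IsPFSS r q u v) (h₁ : IsPFSS r q u₁ v₁) :
    ∃ α : ℝ, 0 < α ∧ (∀ x, u₁ x = α * u x) ∧ (∀ x, v₁ x = α⁻¹ * v x) := by
  obtain ⟨hsu, hsv, hu, hv, hu', hv', hw, htop, hbot⟩ := h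
  obtain ⟨hsu₁, hsv₁, hu₁, hv₁, hu₁', hv₁', hw₁, htop₁, hbot₁⟩ := h₁
  -- the four constant Wronskians
  set a : ℝ := r 0 * (deriv v 0 * u₁ 0 - v 0 * deriv u₁ 0) with hadef
  set b : ℝ := r 0 * (deriv u₁ 0 * u 0 - u₁ 0 * deriv u 0) with hbdef
  set c : ℝ := r 0 * (deriv v 0 * v₁ 0 - v 0 * deriv v₁ 0) with hcdef
  set d : ℝ := r 0 * (deriv v₁ 0 * u 0 - v₁ 0 * deriv u 0) with hddef
  have hac : ∀ x, r x * (deriv v x * u₁ x - v x * deriv u₁ x) = a :=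
    fun x => wronskian_const r q v u₁ hsv hsu₁ x 0
  have hbc : ∀ x, r x * (deriv u₁ x * u x - u₁ x * deriv u x) = b :=
    fun x => wronskian_const r q u₁ u hsu₁ hsu x 0
  have hcc : ∀ x, r x * (deriv v x * v₁ x - v x * deriv v₁ x) = c :=
    fun x => wronskian_const r q v v₁ hsv hsv₁ x 0
  have hdc : ∀ x, r x * (deriv v₁ x * u x - v₁ x * deriv u x) = d :=
    fun x => wronskian_const r q v₁ u hsv₁ hsu x 0
  -- representation of u₁ and v₁
  have repu₁ : ∀ x, u₁ x = a * u x + b * v x := by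
    intro x
    have h1 := hac x
    have h2 := hbc x
    have h3 := hw x
    linear_combination u x * h1 + v x * h2 - u₁ x * h3
  have repv₁ : ∀ x, v₁ x = c * u x + d * v x := by
    intro x
    have h1 := hcc x
    have h2 := hdc x
    have h3 := hw x
    linear_combination u x * h1 + v x * h2 - v₁ x * h3
  -- the Plücker relation d*a - c*b = 1
  have key : d * a - c * b = 1 := by
    have e1 := hw 0
    have e2 := hw₁ 0
    rw [hadef, hbdef, hcdef, hddef]
    linear_combination (r 0 * (deriv v 0 * u 0 - deriv u 0 * v 0)) * e2 + e1
  -- limits at +∞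
  have hnumtop : Tendsto (fun x => a * (u x / v x) + b) atTop (nhds b) := by
    have := (tendsto_const_nhds (x := a) (f := atTop)).mul htop
    have h2 := this.add (tendsto_const_nhds (x := b) (f := atTop))
    simpa using h2
  have hdentop : Tendsto (fun x => c * (u x / v x) + d) atTop (nhds d) := by
    have := (tendsto_const_nhds (x := c) (f := atTop)).mul htop
    have h2 := this.add (tendsto_const_nhds (x := d) (f := atTop))
    simpa using h2
  have hnumbot : Tendsto (fun x => c + d * (v x / u x)) atBot (nhds c) := by
    have := (tendsto_const_nhds (x := d) (f := atBot)).mul hbot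
    have h2 := (tendsto_const_nhds (x := c) (f := atBot)).add this
    simpa using h2
  have hdenbot : Tendsto (fun x => a + b * (v x / u x)) atBot (nhds a) := by
    have := (tendsto_const_nhds (x := b) (f := atBot)).mul hbot
    have h2 := (tendsto_const_nhds (x := a) (f := atBot)).add this
    simpa using h2
  -- pointwise rewriting of quotients
  have hnumtop' : ∀ x, a * (u x / v x) + b = u₁ x / v x := by
    intro x
    rw [repu₁ x]
    field_simp [(hv x).ne']
  have hdentop' : ∀ x, c * (u x / v x) + d = v₁ x / v x := by
    intro x
    rw [repv₁ x]
    field_simp [(hv x).ne']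
  have hnumbot' : ∀ x, c + d * (v x / u x) = v₁ x / u x := by
    intro x
    rw [repv₁ x]
    field_simp [(hu x).ne']
  have hdenbot' : ∀ x, a + b * (v x / u x) = u₁ x / u x := by
    intro x
    rw [repu₁ x]
    field_simp [(hu x).ne']
  -- nonnegativity of coefficients
  have bnn : 0 ≤ b := by
    refine ge_of_tendsto' (Tendsto.congr hnumtop' hnumtop) ?_
    exact fun x => div_nonneg (hu₁ x).le (hv x).le
  have dnn : 0 ≤ d := by
    refine ge_of_tendsto' (Tendsto.congr hdentop' hdentop) ?_
    exact fun x => div_nonneg (hv₁ x).le (hv x).le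
  have cnn : 0 ≤ c := by
    refine ge_of_tendsto' (Tendsto.congr hnumbot' hnumbot) ?_
    exact fun x => div_nonneg (hv₁ x).le (hu x).le
  have ann : 0 ≤ a := by
    refine ge_of_tendsto' (Tendsto.congr hdenbot' hdenbot) ?_
    exact fun x => div_nonneg (hu₁ x).le (hu x).le
  -- d ≠ 0
  have dne : d ≠ 0 := by
    intro hd0
    rw [hd0] at key
    nlinarith
  have dpos : 0 < d := lt_of_le_of_ne dnn (Ne.symm dne)
  -- b = 0
  have hb0 : b = 0 := by
    have hquot : ∀ x, u₁ x / v₁ x = (a * (u x / v x) + b) / (c * (u x / v x) + d) := by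
      intro x
      rw [hnumtop' x, hdentop' x]
      rw [div_div_div_cancel_right₀]
      exact (hv x).ne'
    have hlim : Tendsto (fun x => (a * (u x / v x) + b) / (c * (u x / v x) + d)) atTop
        (nhds (b / d)) := hnumtop.div hdentop dne
    have := Tendsto.congr (fun x => (hquot x).symm) hlim
    have h0 := tendsto_nhds_unique this htop₁
    field_simp at h0
    simpa using h0
  -- a > 0 from d*a = 1
  have hda : d * a = 1 := by rw [hb0] at key; linarith
  have apos : 0 < a := by nlinarith
  -- c = 0
  have hc0 : c = 0 := by
    have hquot : ∀ x, v₁ x / u₁ x = (c + d * (v x / u x)) / (a + b * (v x / u x)) := by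
      intro x
      rw [hnumbot' x, hdenbot' x]
      rw [div_div_div_cancel_right₀]
      exact (hu x).ne'
    have hlim : Tendsto (fun x => (c + d * (v x / u x)) / (a + b * (v x / u x))) atBot
        (nhds (c / a)) := hnumbot.div hdenbot apos.ne'
    have := Tendsto.congr (fun x => (hquot x).symm) hlim
    have h0 := tendsto_nhds_unique this hbot₁
    field_simp at h0
    simpa using h0
  -- conclude
  refine ⟨a, apos, ?_, ?_⟩
  · intro x
    rw [repu₁ x, hb0]
    ring
  · intro x
    rw [repv₁ x, hc0]
    have hd : d = a⁻¹ := by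
      field_simp
      linarith [hda]
    rw [hd]
    ring
end

section
/- Suppose ∫_{-∞}^0 dt/r(t) = ∫_0^∞ dt/r(t) = ∞ and q ≡ 0. Then the equation (r z')' = 0 on ℝ has no PFSS. -/
open MeasureTheory Filter Set intervalIntegral

lemma sol_repr (r : ℝ → ℝ) (hrc : Continuous r) (hrpos : ∀ x, 0 < r x)
    (z : ℝ → ℝ) (hz : IsSol r (fun _ => 0) z) (x : ℝ) :
    z x = z 0 + (r 0 * deriv z 0) * ∫ t in (0:ℝ)..x, 1 / r t := by
  obtain ⟨hzd, hwd, hweq⟩ := hz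
  have hconst : ∀ y, r y * deriv z y = r 0 * deriv z 0 := by
    intro y
    exact is_const_of_deriv_eq_zero hwd (fun t => by simpa using hweq t) y 0
  set a := r 0 * deriv z 0 with ha
  have hderiv : ∀ y, deriv z y = a * (1 / r y) := by
    intro y
    rw [mul_one_div, eq_div_iff (hrpos y).ne', mul_comm]
    exact hconst y
  have hcont : Continuous fun y => a * (1 / r y) := by
    apply continuous_const.mul
    exact continuous_const.div hrc (fun y => (hrpos y).ne')
  have hint : ∫ t in (0:ℝ)..x, deriv z t = z x - z 0 := by
    apply intervalIntegral.integral_eq_sub_of_hasDerivAt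
    · exact fun t _ => (hzd t).hasDerivAt
    · have : IntervalIntegrable (fun y => a * (1 / r y)) volume 0 x :=
        hcont.intervalIntegrable 0 x
      apply this.congr
      exact fun t _ => (hderiv t).symm
  have : ∫ t in (0:ℝ)..x, deriv z t = a * ∫ t in (0:ℝ)..x, 1 / r t := by
    rw [show (fun t => deriv z t) = fun t => a * (1 / r t) from funext hderiv]
    exact intervalIntegral.integral_const_mul a _
  linarith [hint, this]

set_option maxHeartbeats 1000000 in
theorem stmt5 (r : ℝ → ℝ) (hrc : Continuous r) (hrpos : ∀ x, 0 < r x)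
    (h1 : ¬ IntegrableOn (fun t => 1 / r t) (Iic 0))
    (h2 : ¬ IntegrableOn (fun t => 1 / r t) (Ioi 0)) :
    ¬ ∃ u v : ℝ → ℝ, IsPFSS r (fun _ => 0) u v := by
  rintro ⟨u, v, hu, hv, hupos, hvpos, hu', hv', hW, -, -⟩
  have hcont1r : Continuous fun t => 1 / r t :=
    continuous_const.div hrc (fun y => (hrpos y).ne')
  set a := r 0 * deriv u 0 with hadef
  set b := r 0 * deriv v 0 with hbdef
  have hua : ∀ x, u x = u 0 + a * ∫ t in (0:ℝ)..x, 1 / r t :=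
    sol_repr r hrc hrpos u hu
  have hvb : ∀ x, v x = v 0 + b * ∫ t in (0:ℝ)..x, 1 / r t :=
    sol_repr r hrc hrpos v hv
  have hale : a ≤ 0 := mul_nonpos_of_nonneg_of_nonpos (hrpos 0).le (hu' 0)
  have hble : 0 ≤ b := mul_nonneg (hrpos 0).le (hv' 0)
  -- on norms: 1/r is positive
  have hnorm : ∀ t, ‖1 / r t‖ = 1 / r t := fun t =>
    Real.norm_of_nonneg (div_nonneg zero_le_one (hrpos t).le)
  -- a = 0, else u becomes negative at +∞ (integral on Ioi 0 would be bounded)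
  have haz : a = 0 := by
    by_contra hne
    have haneg : a < 0 := lt_of_le_of_ne hale hne
    apply h2
    apply MeasureTheory.integrableOn_Ioi_of_intervalIntegral_norm_bounded
      (u 0 / (-a)) 0 (fun i : ℝ => hcont1r.integrableOn_Ioc) (tendsto_id (α := ℝ))
    filter_upwards [eventually_ge_atTop (0:ℝ)] with i hi
    have h0 := hua i
    have hpi := hupos i
    have hFle : (∫ t in (0:ℝ)..i, 1 / r t) ≤ u 0 / (-a) := by
      rw [le_div_iff₀ (by linarith)]
      nlinarith
    calc (∫ t in (0:ℝ)..i, ‖1 / r t‖) = ∫ t in (0:ℝ)..i, 1 / r t := by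
          simp_rw [hnorm]
      _ ≤ u 0 / (-a) := hFle
  -- hence b > 0 (Wronskian)
  have hW0 := hW 0
  have hbu : ∀ x, b * u x - a * v x = 1 := by
    intro x
    have h := hW x
    have hcu : r x * deriv u x = a := by
      obtain ⟨hzd, hwd, hweq⟩ := hu
      exact is_const_of_deriv_eq_zero hwd (fun t => by simpa using hweq t) x 0
    have hcv : r x * deriv v x = b := by
      obtain ⟨hzd, hwd, hweq⟩ := hv
      exact is_const_of_deriv_eq_zero hwd (fun t => by simpa using hweq t) x 0
    linear_combination (-(u x)) * hcv + v x * hcu + h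
  have hbpos : 0 < b := by
    rcases lt_or_eq_of_le hble with h | h
    · exact h
    · exfalso
      have := hbu 0
      rw [haz, ← h] at this
      norm_num at this
  -- then v becomes negative at -∞ unless 1/r integrable on Iic 0
  apply h1
  refine MeasureTheory.integrableOn_Iic_of_intervalIntegral_norm_bounded
    (f := fun t => 1 / r t) (μ := volume) (a := fun i : ℝ => i) (l := atBot) (v 0 / b) 0
    (fun i => hcont1r.integrableOn_Ioc) tendsto_id ?_
  filter_upwards [eventually_le_atBot (0:ℝ)] with i hi
  have h0 := hvb i
  have hpi := hvpos i
  have hFge : -(∫ t in (0:ℝ)..i, 1 / r t) ≤ v 0 / b := by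
    rw [le_div_iff₀ hbpos]
    nlinarith
  calc (∫ t in i..(0:ℝ), ‖1 / r t‖) = ∫ t in i..(0:ℝ), 1 / r t := by
        simp_rw [hnorm]
    _ = -(∫ t in (0:ℝ)..i, 1 / r t) := (intervalIntegral.integral_symm 0 i)
    _ ≤ v 0 / b := hFge
end

section
/- Let {u, v} be a PFSS of (r z')' = q z and ρ = u v. For each x ∈ ℝ the equation ∫_{x-s}^{x+s} dt/(r(t)ρ(t)) = 1 in s ≥ 0 has a unique positive solution s(x), and the function s satisfies the Lipschitz bound |s(x+t) - s(x)| ≤ |t| for all |t| ≤ s(x). -/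
open MeasureTheory Filter Set intervalIntegral

theorem stmt7 (r q u v ρ : ℝ → ℝ) (h : IsPFSS r q u v) (hρ : ∀ x, ρ x = u x * v x)
    (hloc : LocallyIntegrable (fun t => 1 / (r t * ρ t)) volume) :
    (∀ x : ℝ, ∃! s : ℝ, 0 ≤ s ∧ (∫ t in (x - s)..(x + s), 1 / (r t * ρ t)) = 1) ∧
    ∀ s : ℝ → ℝ, (∀ x, 0 ≤ s x ∧ (∫ t in (x - s x)..(x + s x), 1 / (r t * ρ t)) = 1) →
      (∀ x, 0 < s x) ∧ ∀ x t : ℝ, |t| ≤ s x → |s (x + t) - s x| ≤ |t| := by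
  obtain ⟨⟨hud, -, -⟩, ⟨hvd, -, -⟩, hu, hv, hu', hv', hW, htop, -⟩ := h
  set f : ℝ → ℝ := fun t => 1 / (r t * ρ t) with hfdef
  have hr : ∀ x, 0 < r x := by
    intro x
    have h1 := hW x
    have h2 : 0 ≤ deriv v x * u x - deriv u x * v x := by
      have := hu' x; have := hv' x
      nlinarith [(hu x).le, (hv x).le]
    nlinarith
  have hfpos : ∀ x, 0 < f x := by
    intro x
    have h0 : 0 < r x * ρ x := by
      rw [hρ x]; exact mul_pos (hr x) (mul_pos (hu x) (hv x))
    exact one_div_pos.2 h0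
  set g : ℝ → ℝ := fun x => Real.log (v x / u x) with hgdef
  have hgd : ∀ x, HasDerivAt g (f x) x := by
    intro x
    have hux := (hu x).ne'
    have hvx := (hv x).ne'
    have hdiv : HasDerivAt (fun y => v y / u y)
        ((deriv v x * u x - v x * deriv u x) / (u x) ^ 2) x :=
      (hvd x).hasDerivAt.div (hud x).hasDerivAt hux
    have hpos : v x / u x ≠ 0 := by positivity
    have := hdiv.log hpos
    convert this using 1
    have h1 := hW x
    have hrx := (hr x).ne'
    show 1 / (r x * ρ x) = _
    rw [hρ x]
    field_simp
    linear_combination (-1 : ℝ) * h1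
  have hgc : Continuous g := by
    exact continuous_iff_continuousAt.2 fun x => (hgd x).continuousAt
  have hint : ∀ a b : ℝ, IntervalIntegrable f volume a b := fun a b =>
    (hloc.integrableOn_isCompact isCompact_uIcc).intervalIntegrable
  have hftc : ∀ a b : ℝ, (∫ t in a..b, f t) = g b - g a := fun a b =>
    integral_eq_sub_of_hasDerivAt (fun x _ => hgd x) (hint a b)
  have hgmono : StrictMono g := by
    intro a b hab
    have hpos := intervalIntegral_pos_of_pos (hint a b) hfpos hab
    rw [hftc a b] at hpos
    linarith
  -- key abbreviation : F x s = g (x + s) - g (x - s)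
  have hF : ∀ x s : ℝ, (∫ t in (x - s)..(x + s), f t) = g (x + s) - g (x - s) := by
    intro x s; exact hftc _ _
  -- strict monotonicity of F in s
  have hFmono : ∀ x : ℝ, StrictMono (fun s => g (x + s) - g (x - s)) := by
    intro x a b hab
    have h1 : g (x + a) < g (x + b) := hgmono (by linarith)
    have h2 : g (x - b) < g (x - a) := hgmono (by linarith)
    simp only
    linarith
  -- existence
  have hex : ∀ x : ℝ, ∃ s : ℝ, 0 ≤ s ∧ g (x + s) - g (x - s) = 1 := by
    intro x
    have hvupos : ∀ y, 0 < v y / u y := fun y => div_pos (hv y) (hu y)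
    have hgtop : Tendsto g atTop atTop := by
      have h1 : Tendsto (fun y => v y / u y) atTop atTop := by
        have : Tendsto (fun y => u y / v y) atTop (nhdsWithin 0 (Ioi 0)) :=
          tendsto_nhdsWithin_of_tendsto_nhds_of_eventually_within _ htop
            (Eventually.of_forall fun y => div_pos (hu y) (hv y))
        have := this.inv_tendsto_nhdsGT_zero
        refine this.congr fun y => ?_
        simp [one_div]
      exact Real.tendsto_log_atTop.comp h1
    obtain ⟨Y, hY⟩ := (hgtop.eventually_ge_atTop (g x + 1)).exists_forall_of_atTop
    set S : ℝ := max (Y - x) 0 with hS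
    have hS0 : 0 ≤ S := le_max_right _ _
    have h1 : g x + 1 ≤ g (x + S) := hY _ (by have := le_max_left (Y - x) 0; simp only [hS]; linarith)
    have h2 : g (x - S) ≤ g x := hgmono.monotone (by linarith)
    have hFS : 1 ≤ g (x + S) - g (x - S) := by linarith
    have hF0 : g (x + 0) - g (x - 0) = 0 := by simp
    have hcont : ContinuousOn (fun s => g (x + s) - g (x - s)) (Icc 0 S) :=
      (((hgc.comp (continuous_const.add continuous_id)).sub
        (hgc.comp (continuous_const.sub continuous_id)))).continuousOn
    have hmem : (1 : ℝ) ∈ Icc (g (x + 0) - g (x - 0)) (g (x + S) - g (x - S)) := by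
      constructor
      · rw [hF0]; norm_num
      · exact hFS
    obtain ⟨s, hs1, hs2⟩ := intermediate_value_Icc hS0 hcont hmem
    exact ⟨s, hs1.1, hs2⟩
  constructor
  · intro x
    obtain ⟨s, hs0, hs1⟩ := hex x
    refine ⟨s, ⟨hs0, by rw [hF]; exact hs1⟩, ?_⟩
    rintro s' ⟨hs'0, hs'1⟩
    rw [hF] at hs'1
    exact (hFmono x).injective (by rw [hs'1, hs1])
  · intro s hs
    have hspos : ∀ x, 0 < s x := by
      intro x
      rcases lt_or_eq_of_le (hs x).1 with h | h
      · exact h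
      · exfalso
        have := (hs x).2
        rw [← h] at this
        simp at this
    refine ⟨hspos, ?_⟩
    intro x t ht
    have hx := (hs x).2
    have hxt := (hs (x + t)).2
    rw [hF] at hx hxt
    have habs := abs_le.1 ht
    have habs1 := le_abs_self t
    have habs2 := neg_abs_le t
    rw [abs_le]
    constructor
    · -- s x - |t| ≤ s (x + t)
      by_contra hc
      push_neg at hc
      have hlt : s (x + t) < s x - |t| := by linarith
      have := hFmono (x + t) hlt
      simp only at this
      have h1 : g (x + t + (s x - |t|)) ≤ g (x + s x) := hgmono.monotone (by linarith)
      have h2 : g (x - s x) ≤ g (x + t - (s x - |t|)) := hgmono.monotone (by linarith)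
      rw [hxt] at this
      linarith [hx]
    · -- s (x + t) ≤ s x + |t|
      by_contra hc
      push_neg at hc
      have hlt : s x + |t| < s (x + t) := by linarith
      have := hFmono (x + t) hlt
      simp only at this
      have h1 : g (x + s x) ≤ g (x + t + (s x + |t|)) := hgmono.monotone (by linarith)
      have h2 : g (x + t - (s x + |t|)) ≤ g (x - s x) := hgmono.monotone (by linarith)
      rw [hxt] at this
      linarith [hx]
end

section
/- With s(x) defined by ∫_{x-s(x)}^{x+s(x)} dt/(r(t)ρ(t)) = 1, we have x + s(x) → -∞ as x → -∞ and x - s(x) → ∞ as x → ∞; moreover there exists c ≥ 1 such that s(x) ≤ c(1+|x|) for all x ∈ ℝ. -/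
open MeasureTheory Filter Set intervalIntegral

theorem stmt8 (r ρ s : ℝ → ℝ) (hr : ∀ x, 0 < r x) (hρ : ∀ x, 0 < ρ x)
    (hρc : Continuous ρ)
    (hloc : LocallyIntegrable (fun t => 1 / (r t * ρ t)) volume)
    (hdiv1 : ¬ IntegrableOn (fun t => 1 / (r t * ρ t)) (Iic 0))
    (hdiv2 : ¬ IntegrableOn (fun t => 1 / (r t * ρ t)) (Ioi 0))
    (hs : ∀ x, 0 < s x ∧ (∫ t in (x - s x)..(x + s x), 1 / (r t * ρ t)) = 1) :
    Tendsto (fun x => x + s x) atBot atBot ∧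
    Tendsto (fun x => x - s x) atTop atTop ∧
    ∃ c : ℝ, 1 ≤ c ∧ ∀ x, s x ≤ c * (1 + |x|) := by
  set f : ℝ → ℝ := fun t => 1 / (r t * ρ t) with hf
  have hfpos : ∀ t, 0 < f t := fun t => by
    simp only [hf]
    exact one_div_pos.2 (mul_pos (hr t) (hρ t))
  have hfint : ∀ a b : ℝ, IntegrableOn f (Icc a b) volume := fun a b =>
    hloc.integrableOn_isCompact isCompact_Icc
  have hfii : ∀ a b : ℝ, a ≤ b → IntervalIntegrable f volume a b := fun a b hab =>
    (intervalIntegrable_iff_integrableOn_Icc_of_le hab).2 (hfint a b)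
  have hnorm : ∀ a b : ℝ, (∫ x in a..b, ‖f x‖) = ∫ x in a..b, f x := by
    intro a b
    apply intervalIntegral.integral_congr
    intro x _
    exact Real.norm_of_nonneg (hfpos x).le
  -- divergence on the left of any point
  have div_neg : ∀ M : ℝ, ∃ a, a < M ∧ 1 < ∫ t in a..M, f t := by
    intro M
    by_contra h
    push_neg at h
    apply hdiv1
    have hIic : IntegrableOn f (Iic M) volume := by
      apply integrableOn_Iic_of_intervalIntegral_norm_bounded (f := f)
        (a := fun n : ℕ => M - 1 - n) (l := atTop) 1 M
      · intro n
        exact (hfint (M - 1 - n) M).mono_set Ioc_subset_Icc_self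
      · rw [tendsto_atBot]
        intro c
        obtain ⟨N, hN⟩ := exists_nat_ge (M - 1 - c)
        filter_upwards [eventually_ge_atTop N] with n hn
        have : (N:ℝ) ≤ n := Nat.cast_le.2 hn
        linarith
      · filter_upwards with n
        rw [hnorm]
        exact h _ (by have : (0:ℝ) ≤ n := n.cast_nonneg; linarith)
    refine hIic.union ((hfint M 0)) |>.mono_set ?_
    intro t ht
    rcases le_or_gt t M with h1 | h1
    · exact Or.inl h1
    · exact Or.inr ⟨h1.le, ht⟩
  -- divergence on the right of any point
  have div_pos : ∀ M : ℝ, ∃ b, M < b ∧ 1 < ∫ t in M..b, f t := by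
    intro M
    by_contra h
    push_neg at h
    apply hdiv2
    have hIoi : IntegrableOn f (Ioi M) volume := by
      apply integrableOn_Ioi_of_intervalIntegral_norm_bounded (f := f)
        (b := fun n : ℕ => M + 1 + n) (l := atTop) 1 M
      · intro n
        exact (hfint M (M + 1 + n)).mono_set Ioc_subset_Icc_self
      · rw [tendsto_atTop]
        intro c
        obtain ⟨N, hN⟩ := exists_nat_ge (c - M - 1)
        filter_upwards [eventually_ge_atTop N] with n hn
        have : (N:ℝ) ≤ n := Nat.cast_le.2 hn
        linarith
      · filter_upwards with n
        rw [hnorm]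
        exact h _ (by have : (0:ℝ) ≤ n := n.cast_nonneg; linarith)
    refine hIoi.union ((hfint 0 M)) |>.mono_set ?_
    intro t ht
    rcases lt_or_ge M t with h1 | h1
    · exact Or.inl h1
    · exact Or.inr ⟨le_of_lt ht, h1⟩
  -- key: if [a, b] ⊆ [x - s x, x + s x] with a ≤ b then ∫_a^b f ≤ 1
  have key : ∀ x a b : ℝ, x - s x ≤ a → a ≤ b → b ≤ x + s x → (∫ t in a..b, f t) ≤ 1 := by
    intro x a b h1 h2 h3
    rw [← (hs x).2]
    refine intervalIntegral.integral_mono_interval h1 h2 h3 ?_ ?_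
    · filter_upwards with t using (hfpos t).le
    · exact hfii _ _ (by have := (hs x).1; linarith)
  refine ⟨?_, ?_, ?_⟩
  · -- x + s x → -∞
    rw [tendsto_atBot]
    intro M
    obtain ⟨a, haM, hint⟩ := div_neg M
    filter_upwards [eventually_le_atBot a] with x hx
    by_contra hcon
    push_neg at hcon
    have hsx := (hs x).1
    exact absurd (key x a M (by linarith) haM.le hcon.le) (not_le.2 hint)
  · -- x - s x → ∞
    rw [tendsto_atTop]
    intro M
    obtain ⟨b, hMb, hint⟩ := div_pos M
    filter_upwards [eventually_ge_atTop b] with x hx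
    by_contra hcon
    push_neg at hcon
    have hsx := (hs x).1
    exact absurd (key x M b hcon.le hMb.le (by linarith)) (not_le.2 hint)
  · -- linear bound
    obtain ⟨b, hb0, hint⟩ := div_pos 0
    refine ⟨max b 1, le_max_right _ _, fun x => ?_⟩
    have hsx := (hs x).1
    have hbound : s x ≤ |x| + b := by
      by_contra hcon
      push_neg at hcon
      have h1 : x - s x ≤ 0 := by
        have := le_abs_self x; linarith
      have h2 : b ≤ x + s x := by
        have := neg_abs_le x; linarith
      exact absurd (key x 0 b h1 hb0.le h2) (not_le.2 hint)
    have h1 : b ≤ max b 1 := le_max_left _ _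
    have h2 : |x| ≤ max b 1 * |x| := le_mul_of_one_le_left (abs_nonneg x) (le_max_right _ _)
    calc s x ≤ |x| + b := hbound
      _ ≤ max b 1 * |x| + max b 1 := by linarith
      _ = max b 1 * (1 + |x|) := by ring
end

section
/- Let {u, v} be a PFSS of (r z')' = q z with generating function ρ = u v, and let s(x) solve ∫_{x-s(x)}^{x+s(x)} dt/(r ρ) = 1. Then for all t ∈ [x - s(x), x + s(x)]: e⁻¹ ρ(x) ≤ ρ(t) ≤ e ρ(x), e⁻¹ u(x) ≤ u(t) ≤ e u(x), and e⁻¹ v(x) ≤ v(t) ≤ e v(x). -/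
open MeasureTheory Filter Set intervalIntegral

lemma abs_sub_le_of_deriv {f h : ℝ → ℝ} {f' h' : ℝ → ℝ}
    (hf : ∀ y, HasDerivAt f (f' y) y) (hh : ∀ y, HasDerivAt h (h' y) y)
    (hb : ∀ y, |f' y| ≤ h' y) {a b : ℝ} (hab : a ≤ b) :
    |f b - f a| ≤ h b - h a := by
  have m1 : Monotone (fun y => h y - f y) := by
    apply monotone_of_deriv_nonneg
    · exact fun y => ((hh y).sub (hf y)).differentiableAt
    · intro y
      rw [show deriv (fun y => h y - f y) y = h' y - f' y from ((hh y).sub (hf y)).deriv]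
      have := abs_le.mp (hb y)
      linarith [this.2]
  have m2 : Monotone (fun y => h y + f y) := by
    apply monotone_of_deriv_nonneg
    · exact fun y => ((hh y).add (hf y)).differentiableAt
    · intro y
      rw [show deriv (fun y => h y + f y) y = h' y + f' y from ((hh y).add (hf y)).deriv]
      have := abs_le.mp (hb y)
      linarith [this.1]
  have := m1 hab
  have := m2 hab
  rw [abs_le]
  constructor <;> simp only at * <;> linarith

lemma bounds_of_abs_log {A B : ℝ} (hA : 0 < A) (hB : 0 < B)
    (h : |Real.log B - Real.log A| ≤ 1) :
    A / Real.exp 1 ≤ B ∧ B ≤ Real.exp 1 * A := by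
  obtain ⟨h1, h2⟩ := abs_le.mp h
  constructor
  · rw [div_le_iff₀ (Real.exp_pos 1)]
    calc A = Real.exp (Real.log A) := (Real.exp_log hA).symm
    _ ≤ Real.exp (Real.log B + 1) := Real.exp_le_exp.mpr (by linarith)
    _ = B * Real.exp 1 := by rw [Real.exp_add, Real.exp_log hB]
  · calc B = Real.exp (Real.log B) := (Real.exp_log hB).symm
    _ ≤ Real.exp (Real.log A + 1) := Real.exp_le_exp.mpr (by linarith)
    _ = Real.exp 1 * A := by rw [Real.exp_add, Real.exp_log hA, mul_comm]

theorem stmt9 (r q u v ρ s : ℝ → ℝ) (h : IsPFSS r q u v) (hρ : ∀ x, ρ x = u x * v x)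
    (hs : ∀ x, 0 < s x ∧ (∫ t in (x - s x)..(x + s x), 1 / (r t * ρ t)) = 1)
    (x t : ℝ) (ht : t ∈ Icc (x - s x) (x + s x)) :
    ρ x / Real.exp 1 ≤ ρ t ∧ ρ t ≤ Real.exp 1 * ρ x ∧
    u x / Real.exp 1 ≤ u t ∧ u t ≤ Real.exp 1 * u x ∧
    v x / Real.exp 1 ≤ v t ∧ v t ≤ Real.exp 1 * v x := by
  obtain ⟨⟨hud, -, -⟩, ⟨hvd, -, -⟩, hu, hv, hu', hv', hw, -, -⟩ := h
  set a := x - s x with ha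
  set b := x + s x with hb
  have hab : a ≤ b := by have := (hs x).1; simp only [ha, hb]; try linarith
  have hax : a ≤ x := by have := (hs x).1; simp only [ha]; linarith
  have hxb : x ≤ b := by have := (hs x).1; simp only [hb]; linarith
  have hr : ∀ y, r y ≠ 0 := fun y => left_ne_zero_of_mul_eq_one (hw y)
  -- derivative of log u, log v
  have hlu : ∀ y, HasDerivAt (fun z => Real.log (u z)) (deriv u y / u y) y := by
    intro y
    have := (Real.hasDerivAt_log (hu y).ne').comp y (hud y).hasDerivAt
    exact (hud y).hasDerivAt.log (hu y).ne'
  have hlv : ∀ y, HasDerivAt (fun z => Real.log (v z)) (deriv v y / v y) y := by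
    intro y
    have := (Real.hasDerivAt_log (hv y).ne').comp y (hvd y).hasDerivAt
    exact (hvd y).hasDerivAt.log (hv y).ne'
  -- key identity
  have hkey : ∀ y, deriv v y / v y - deriv u y / u y = 1 / (r y * ρ y) := by
    intro y
    rw [hρ]
    have hwy := hw y
    field_simp [(hu y).ne', (hv y).ne', hr y]
    linear_combination hwy
  have hH : ∀ y, HasDerivAt (fun z => Real.log (v z) - Real.log (u z)) (1 / (r y * ρ y)) y := by
    intro y
    have := (hlv y).sub (hlu y)
    rwa [hkey y] at this
  have hHnn : ∀ y, 0 ≤ 1 / (r y * ρ y) := by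
    intro y
    rw [← hkey y]
    have h1 : deriv v y / v y ≥ 0 := div_nonneg (hv' y) (hv y).le
    have h2 : deriv u y / u y ≤ 0 := div_nonpos_of_nonpos_of_nonneg (hu' y) (hu y).le
    linarith
  -- integrability and FTC
  have hint : IntervalIntegrable (fun t => 1 / (r t * ρ t)) volume a b := by
    by_contra hcon
    have := (hs x).2
    rw [intervalIntegral.integral_undef hcon] at this
    norm_num at this
  have hftc : (Real.log (v b) - Real.log (u b)) - (Real.log (v a) - Real.log (u a)) = 1 := by
    have := intervalIntegral.integral_eq_sub_of_hasDerivAt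
      (f := fun z => Real.log (v z) - Real.log (u z))
      (fun y _ => hH y) hint
    rw [← this]
    exact (hs x).2
  have hHmono : Monotone (fun z => Real.log (v z) - Real.log (u z)) := by
    apply monotone_of_deriv_nonneg
    · exact fun y => (hH y).differentiableAt
    · intro y; rw [(hH y).deriv]; exact hHnn y
  obtain ⟨hta, htb⟩ := ht
  -- generic bound: for f with |f'| ≤ 1/(rρ), |f t - f x| ≤ 1
  have main : ∀ (f f' : ℝ → ℝ), (∀ y, HasDerivAt f (f' y) y) →
      (∀ y, |f' y| ≤ 1 / (r y * ρ y)) → |f t - f x| ≤ 1 := by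
    intro f f' hf hbd
    have hH' := fun y => hH y
    rcases le_total t x with hc | hc
    · have h1 := abs_sub_le_of_deriv hf hH' hbd hc
      rw [abs_sub_comm] at h1
      have h2 : (Real.log (v x) - Real.log (u x)) - (Real.log (v t) - Real.log (u t)) ≤ 1 := by
        have e1 := hHmono hta
        have e2 := hHmono hxb
        simp only at e1 e2
        linarith
      linarith
    · have h1 := abs_sub_le_of_deriv hf hH' hbd hc
      have h2 : (Real.log (v t) - Real.log (u t)) - (Real.log (v x) - Real.log (u x)) ≤ 1 := by
        have e1 := hHmono hax
        have e2 := hHmono htb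
        simp only at e1 e2
        linarith
      linarith
  -- bounds on the three derivatives
  have bdu : ∀ y, |deriv u y / u y| ≤ 1 / (r y * ρ y) := by
    intro y
    rw [← hkey y, abs_le]
    have h1 : deriv v y / v y ≥ 0 := div_nonneg (hv' y) (hv y).le
    have h2 : deriv u y / u y ≤ 0 := div_nonpos_of_nonpos_of_nonneg (hu' y) (hu y).le
    constructor <;> linarith
  have bdv : ∀ y, |deriv v y / v y| ≤ 1 / (r y * ρ y) := by
    intro y
    rw [← hkey y, abs_le]
    have h1 : deriv v y / v y ≥ 0 := div_nonneg (hv' y) (hv y).le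
    have h2 : deriv u y / u y ≤ 0 := div_nonpos_of_nonpos_of_nonneg (hu' y) (hu y).le
    constructor <;> linarith
  have bdρ : ∀ y, |deriv u y / u y + deriv v y / v y| ≤ 1 / (r y * ρ y) := by
    intro y
    rw [← hkey y, abs_le]
    have h1 : deriv v y / v y ≥ 0 := div_nonneg (hv' y) (hv y).le
    have h2 : deriv u y / u y ≤ 0 := div_nonpos_of_nonpos_of_nonneg (hu' y) (hu y).le
    constructor <;> linarith
  have hu1 : |Real.log (u t) - Real.log (u x)| ≤ 1 :=
    main _ _ hlu bdu
  have hv1 : |Real.log (v t) - Real.log (v x)| ≤ 1 :=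
    main _ _ hlv bdv
  have hρ1 : |Real.log (ρ t) - Real.log (ρ x)| ≤ 1 := by
    have hf : ∀ y, HasDerivAt (fun z => Real.log (u z) + Real.log (v z))
        (deriv u y / u y + deriv v y / v y) y := fun y => (hlu y).add (hlv y)
    have := main _ _ hf bdρ
    have e1 : Real.log (ρ t) = Real.log (u t) + Real.log (v t) := by
      rw [hρ, Real.log_mul (hu t).ne' (hv t).ne']
    have e2 : Real.log (ρ x) = Real.log (u x) + Real.log (v x) := by
      rw [hρ, Real.log_mul (hu x).ne' (hv x).ne']
    rw [e1, e2]
    simpa using this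
  have Bρ := bounds_of_abs_log (by rw [hρ]; exact mul_pos (hu x) (hv x)) (by rw [hρ]; exact mul_pos (hu t) (hv t)) hρ1
  have Bu := bounds_of_abs_log (hu x) (hu t) hu1
  have Bv := bounds_of_abs_log (hv x) (hv t) hv1
  exact ⟨Bρ.1, Bρ.2, Bu.1, Bu.2, Bv.1, Bv.2⟩
end

section
/- Let {u, v} be a PFSS of (r z')' = q z, G(x,t) = u(max(x,t)) v(min(x,t)) the Green function. Then ∫_{-∞}^∞ q(t) G(x,t) dt ≤ 1 for every x ∈ ℝ. -/
open MeasureTheory Filter Set intervalIntegral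

theorem stmt11 (r q u v : ℝ → ℝ) (h : IsPFSS r q u v)
    (hq : ∀ x, 0 ≤ q x) (hqloc : LocallyIntegrable q volume)
    (G : ℝ → ℝ → ℝ) (hG : ∀ x t, G x t = u (max x t) * v (min x t)) :
    ∀ x : ℝ, (∫ t, q t * G x t) ≤ 1 := by
  obtain ⟨hu, hv, hupos, hvpos, hu', hv', hW, -, -⟩ := h
  intro x
  have hrpos : ∀ t, 0 < r t := by
    intro t
    have hW0 : 0 ≤ deriv v t * u t - deriv u t * v t := by
      nlinarith [hupos t, hvpos t, hu' t, hv' t]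
    rcases lt_or_eq_of_le hW0 with h1 | h1
    · nlinarith [hW t]
    · exfalso; have := hW t; rw [← h1, mul_zero] at this; norm_num at this
  have hqint : ∀ a b : ℝ, IntervalIntegrable q volume a b := fun a b =>
    intervalIntegrable_iff.mpr
      ((hqloc.integrableOn_isCompact isCompact_uIcc).mono_set uIoc_subset_uIcc)
  have hvcont : Continuous v := hv.1.continuous
  have hucont : Continuous u := hu.1.continuous
  have hqv : ∀ a b : ℝ, IntervalIntegrable (fun t => q t * v t) volume a b :=
    fun a b => (hqint a b).mul_continuousOn hvcont.continuousOn
  have hqu : ∀ a b : ℝ, IntervalIntegrable (fun t => q t * u t) volume a b :=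
    fun a b => (hqint a b).mul_continuousOn hucont.continuousOn
  have FTCv : ∀ a b : ℝ, (∫ t in a..b, q t * v t) = r b * deriv v b - r a * deriv v a := by
    intro a b
    have hd : deriv (fun y => r y * deriv v y) = fun t => q t * v t := funext hv.2.2
    have := intervalIntegral.integral_deriv_eq_sub (f := fun y => r y * deriv v y)
      (a := a) (b := b) (fun t _ => hv.2.1 t) (by rw [hd]; exact hqv a b)
    rw [hd] at this; exact this
  have FTCu : ∀ a b : ℝ, (∫ t in a..b, q t * u t) = r b * deriv u b - r a * deriv u a := by
    intro a b
    have hd : deriv (fun y => r y * deriv u y) = fun t => q t * u t := funext hu.2.2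
    have := intervalIntegral.integral_deriv_eq_sub (f := fun y => r y * deriv u y)
      (a := a) (b := b) (fun t _ => hu.2.1 t) (by rw [hd]; exact hqu a b)
    rw [hd] at this; exact this
  have hGint : ∀ c d : ℝ, IntervalIntegrable (fun t => q t * G x t) volume c d := by
    intro c d
    have : (fun t => q t * G x t) = fun t => q t * (u (max x t) * v (min x t)) :=
      funext fun t => by rw [hG]
    rw [this]
    exact (hqint c d).mul_continuousOn
      (((hucont.comp (continuous_const.max continuous_id)).mul
        (hvcont.comp (continuous_const.min continuous_id))).continuousOn)
  have key : ∀ a b : ℝ, a ≤ x → x ≤ b → (∫ t in a..b, q t * G x t) ≤ 1 := by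
    intro a b ha hb
    rw [← intervalIntegral.integral_add_adjacent_intervals (hGint a x) (hGint x b)]
    have e1 : (∫ t in a..x, q t * G x t) = u x * ∫ t in a..x, q t * v t := by
      rw [← intervalIntegral.integral_const_mul]
      apply intervalIntegral.integral_congr
      intro t ht
      rw [uIcc_of_le ha] at ht
      show q t * G x t = u x * (q t * v t)
      rw [hG, max_eq_left ht.2, min_eq_right ht.2]; ring
    have e2 : (∫ t in x..b, q t * G x t) = v x * ∫ t in x..b, q t * u t := by
      rw [← intervalIntegral.integral_const_mul]
      apply intervalIntegral.integral_congr
      intro t ht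
      rw [uIcc_of_le hb] at ht
      show q t * G x t = v x * (q t * u t)
      rw [hG, max_eq_right ht.1, min_eq_left ht.1]; ring
    rw [e1, e2, FTCv a x, FTCu x b]
    have h1 : 0 ≤ r a * deriv v a := mul_nonneg (hrpos a).le (hv' a)
    have h2 : r b * deriv u b ≤ 0 := mul_nonpos_of_nonneg_of_nonpos (hrpos b).le (hu' b)
    nlinarith [hW x, (hupos x).le, (hvpos x).le]
  by_cases hint : Integrable (fun t => q t * G x t) volume
  · have hT := MeasureTheory.intervalIntegral_tendsto_integral hint
      (tendsto_fst (f := atBot) (g := atTop)) (tendsto_snd (f := atBot) (g := atTop))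
    refine le_of_tendsto hT ?_
    filter_upwards [(eventually_le_atBot x).prod_inl atTop,
      (eventually_ge_atTop x).prod_inr atBot] with i h1 h2
    exact key i.1 i.2 h1 h2
  · rw [integral_undef hint]; exact zero_le_one
end

section
/- Suppose inf_{x∈ℝ} q(x) > 0 and the equation (r z')' = q z has a PFSS with generating function ρ and associated function s. Then sup_{x∈ℝ} ρ(x) s(x) < ∞, i.e., equation -(r y')' + q y = f is correctly solvable in L_p(ℝ) for every p ∈ (1,∞). -/
open MeasureTheory Filter Set intervalIntegral

theorem stmt12 (r q u v ρ s : ℝ → ℝ) (h : IsPFSS r q u v)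
    (hρ : ∀ x, ρ x = u x * v x)
    (hs : ∀ x, 0 < s x ∧ (∫ t in (x - s x)..(x + s x), 1 / (r t * ρ t)) = 1)
    (hq : 0 < ⨅ x, q x) :
    ∃ C : ℝ, ∀ x, ρ x * s x ≤ C := by
  obtain ⟨⟨hud, hrud, hueq⟩, ⟨hvd, hrvd, hveq⟩, hupos, hvpos, hu', hv', hW, -, -⟩ := h
  set σ := ⨅ x, q x with hσdef
  have hbdd : BddBelow (Set.range q) := by
    by_contra hb
    rw [hσdef, Real.iInf_of_not_bddBelow hb] at hq
    exact lt_irrefl 0 hq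
  have hqσ : ∀ t, σ ≤ q t := fun t => ciInf_le hbdd t
  have hσpos : 0 < σ := hq
  have hWpos : ∀ t, 0 < deriv v t * u t - deriv u t * v t := by
    intro t
    have h0 : 0 ≤ deriv v t * u t - deriv u t * v t := by
      nlinarith [hupos t, hvpos t, hu' t, hv' t]
    rcases h0.lt_or_eq with h1 | h1
    · exact h1
    · exfalso
      have := hW t
      rw [← h1, mul_zero] at this
      norm_num at this
  have hrpos : ∀ t, 0 < r t := by
    intro t
    nlinarith [hW t, hWpos t]
  have hρpos : ∀ t, 0 < ρ t := fun t => by rw [hρ t]; exact mul_pos (hupos t) (hvpos t)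
  have hwpos : ∀ t, 0 < 1 / (r t * ρ t) := fun t =>
    one_div_pos.mpr (mul_pos (hrpos t) (hρpos t))
  have hkey_v : ∀ t, deriv v t / v t ≤ 1 / (r t * ρ t) := by
    intro t
    rw [div_le_div_iff₀ (hvpos t) (mul_pos (hrpos t) (hρpos t)), hρ t]
    nlinarith [hW t, hupos t, hvpos t, hu' t, hv' t, hrpos t,
      mul_nonneg (mul_nonneg (hrpos t).le (neg_nonneg.mpr (hu' t))) (hvpos t).le]
  have hkey_u : ∀ t, -(deriv u t) / u t ≤ 1 / (r t * ρ t) := by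
    intro t
    rw [div_le_div_iff₀ (hupos t) (mul_pos (hrpos t) (hρpos t)), hρ t]
    nlinarith [hW t, hupos t, hvpos t, hu' t, hv' t, hrpos t,
      mul_nonneg (mul_nonneg (hrpos t).le (hv' t)) (hupos t).le]
  have hgv_nonneg : ∀ t, 0 ≤ deriv v t / v t := fun t => div_nonneg (hv' t) (hvpos t).le
  have hgu_nonneg : ∀ t, 0 ≤ -(deriv u t) / u t :=
    fun t => div_nonneg (neg_nonneg.mpr (hu' t)) (hupos t).le
  refine ⟨Real.exp 1 / (2 * σ), fun x => ?_⟩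
  obtain ⟨hsx, hint⟩ := hs x
  set a := x - s x with ha
  set b := x + s x with hb
  have hax : a ≤ x := by rw [ha]; linarith
  have hxb : x ≤ b := by rw [hb]; linarith
  have hab : a ≤ b := hax.trans hxb
  have hw_int : IntervalIntegrable (fun t => 1 / (r t * ρ t)) volume a b := by
    by_contra hni
    rw [intervalIntegral.integral_undef hni] at hint
    norm_num at hint
  have hsub : ∀ c d, a ≤ c → c ≤ d → d ≤ b → (∫ t in c..d, 1 / (r t * ρ t)) ≤ 1 := by
    intro c d h1 h2 h3
    exact le_of_le_of_eq (intervalIntegral.integral_mono_interval h1 h2 h3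
      (Eventually.of_forall fun t => (hwpos t).le) hw_int) hint
  have hwsub : ∀ c d, a ≤ c → c ≤ d → d ≤ b →
      IntervalIntegrable (fun t => 1 / (r t * ρ t)) volume c d := by
    intro c d h1 h2 h3
    apply hw_int.mono_set
    rw [Set.uIcc_of_le h2, Set.uIcc_of_le hab]
    exact Set.Icc_subset_Icc h1 h3
  -- lower bound for v on [a, x]
  have hv_low : ∀ t ∈ Set.Icc a x, v x ≤ Real.exp 1 * v t := by
    intro t ht
    have hwt := hwsub t x ht.1 ht.2 hxb
    have hgint : IntervalIntegrable (fun y => deriv v y / v y) volume t x := by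
      apply hwt.mono_fun'
      · exact ((measurable_deriv v).div hvd.continuous.measurable).aestronglyMeasurable
      · exact Eventually.of_forall fun y => by
          show ‖deriv v y / v y‖ ≤ 1 / (r y * ρ y)
          rw [Real.norm_eq_abs, abs_of_nonneg (hgv_nonneg y)]; exact hkey_v y
    have hftc : (∫ y in t..x, deriv v y / v y) = Real.log (v x) - Real.log (v t) := by
      apply intervalIntegral.integral_eq_sub_of_hasDerivAt (fun y _ => ?_) hgint
      have h1 := (Real.hasDerivAt_log (ne_of_gt (hvpos y))).comp y (hvd y).hasDerivAt
      rw [div_eq_inv_mul]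
      exact h1
    have hle1 : Real.log (v x) - Real.log (v t) ≤ 1 := by
      rw [← hftc]
      calc (∫ y in t..x, deriv v y / v y) ≤ ∫ y in t..x, 1 / (r y * ρ y) :=
            intervalIntegral.integral_mono_on ht.2 hgint hwt (fun y _ => hkey_v y)
        _ ≤ 1 := hsub t x ht.1 ht.2 hxb
    calc v x = Real.exp (Real.log (v x)) := (Real.exp_log (hvpos x)).symm
      _ ≤ Real.exp (1 + Real.log (v t)) := Real.exp_le_exp.mpr (by linarith)
      _ = Real.exp 1 * v t := by rw [Real.exp_add, Real.exp_log (hvpos t)]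
  -- lower bound for u on [x, b]
  have hu_low : ∀ t ∈ Set.Icc x b, u x ≤ Real.exp 1 * u t := by
    intro t ht
    have hwt := hwsub x t (hax) ht.1 ht.2
    have hgint : IntervalIntegrable (fun y => -(deriv u y) / u y) volume x t := by
      apply hwt.mono_fun'
      · exact (((measurable_deriv u).neg).div hud.continuous.measurable).aestronglyMeasurable
      · exact Eventually.of_forall fun y => by
          show ‖-deriv u y / u y‖ ≤ 1 / (r y * ρ y)
          rw [Real.norm_eq_abs, abs_of_nonneg (hgu_nonneg y)]; exact hkey_u y
    have hftc : (∫ y in x..t, -(deriv u y) / u y) =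
        (-Real.log (u t)) - (-Real.log (u x)) := by
      apply intervalIntegral.integral_eq_sub_of_hasDerivAt (fun y _ => ?_) hgint
      have h1 := ((Real.hasDerivAt_log (ne_of_gt (hupos y))).comp y (hud y).hasDerivAt).neg
      have h2 : -(deriv u y) / u y = -((u y)⁻¹ * deriv u y) := by field_simp
      rw [h2]
      exact h1
    have hle1 : Real.log (u x) - Real.log (u t) ≤ 1 := by
      have := calc (∫ y in x..t, -(deriv u y) / u y) ≤ ∫ y in x..t, 1 / (r y * ρ y) :=
            intervalIntegral.integral_mono_on ht.1 hgint hwt (fun y _ => hkey_u y)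
        _ ≤ 1 := hsub x t hax ht.1 ht.2
      rw [hftc] at this
      linarith
    calc u x = Real.exp (Real.log (u x)) := (Real.exp_log (hupos x)).symm
      _ ≤ Real.exp (1 + Real.log (u t)) := Real.exp_le_exp.mpr (by linarith)
      _ = Real.exp 1 * u t := by rw [Real.exp_add, Real.exp_log (hupos t)]
  -- monotone function arguments
  have hVd : ∀ y : ℝ, HasDerivAt (fun z => ∫ t in (0:ℝ)..z, v t) (v y) y := fun y =>
    intervalIntegral.integral_hasDerivAt_right (hvd.continuous.intervalIntegrable 0 y)
      (hvd.continuous.stronglyMeasurableAtFilter _ _) hvd.continuous.continuousAt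
  have hUd : ∀ y : ℝ, HasDerivAt (fun z => ∫ t in (0:ℝ)..z, u t) (u y) y := fun y =>
    intervalIntegral.integral_hasDerivAt_right (hud.continuous.intervalIntegrable 0 y)
      (hud.continuous.stronglyMeasurableAtFilter _ _) hud.continuous.continuousAt
  have hFv : ∀ y, HasDerivAt (fun z => r z * deriv v z) (q y * v y) y := by
    intro y
    have h1 := (hrvd y).hasDerivAt
    rwa [hveq y] at h1
  have hFu : ∀ y, HasDerivAt (fun z => r z * deriv u z) (q y * u y) y := by
    intro y
    have h1 := (hrud y).hasDerivAt
    rwa [hueq y] at h1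
  have hGvd : ∀ y, HasDerivAt
      (fun z => r z * deriv v z - σ * ∫ t in (0:ℝ)..z, v t) (q y * v y - σ * v y) y :=
    fun y => (hFv y).sub ((hVd y).const_mul σ)
  have hGud : ∀ y, HasDerivAt
      (fun z => r z * deriv u z - σ * ∫ t in (0:ℝ)..z, u t) (q y * u y - σ * u y) y :=
    fun y => (hFu y).sub ((hUd y).const_mul σ)
  have hGvmono : Monotone (fun z => r z * deriv v z - σ * ∫ t in (0:ℝ)..z, v t) := by
    apply monotone_of_deriv_nonneg (fun y => (hGvd y).differentiableAt)
    intro y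
    rw [(hGvd y).deriv]
    nlinarith [hqσ y, hvpos y]
  have hGumono : Monotone (fun z => r z * deriv u z - σ * ∫ t in (0:ℝ)..z, u t) := by
    apply monotone_of_deriv_nonneg (fun y => (hGud y).differentiableAt)
    intro y
    rw [(hGud y).deriv]
    nlinarith [hqσ y, hupos y]
  -- v side
  have hVdiff : (∫ t in (0:ℝ)..x, v t) - (∫ t in (0:ℝ)..a, v t) = ∫ t in a..x, v t :=
    intervalIntegral.integral_interval_sub_left (hvd.continuous.intervalIntegrable 0 x)
      (hvd.continuous.intervalIntegrable 0 a)
  have hA : σ * (∫ t in a..x, v t) ≤ r x * deriv v x := by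
    have h1 := hGvmono hax
    simp only [] at h1
    have h2 : 0 ≤ r a * deriv v a := mul_nonneg (hrpos a).le (hv' a)
    nlinarith [hVdiff]
  have hIv : s x * v x ≤ Real.exp 1 * ∫ t in a..x, v t := by
    have h1 := intervalIntegral.integral_mono_on (μ := volume) hax
      (_root_.intervalIntegrable_const (c := v x)) ((continuous_const.mul hvd.continuous).intervalIntegrable a x) hv_low
    simp only [Pi.mul_apply] at h1
    rw [intervalIntegral.integral_const, intervalIntegral.integral_const_mul, smul_eq_mul] at h1
    have h2 : x - a = s x := by rw [ha]; ring
    rw [h2] at h1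
    exact h1
  have e1 : σ * (s x * v x) ≤ Real.exp 1 * (r x * deriv v x) := by
    calc σ * (s x * v x) ≤ σ * (Real.exp 1 * ∫ t in a..x, v t) := by nlinarith
      _ = Real.exp 1 * (σ * ∫ t in a..x, v t) := by ring
      _ ≤ Real.exp 1 * (r x * deriv v x) := by nlinarith [Real.exp_pos 1]
  -- u side
  have hUdiff : (∫ t in (0:ℝ)..b, u t) - (∫ t in (0:ℝ)..x, u t) = ∫ t in x..b, u t :=
    intervalIntegral.integral_interval_sub_left (hud.continuous.intervalIntegrable 0 b)
      (hud.continuous.intervalIntegrable 0 x)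
  have hB : σ * (∫ t in x..b, u t) ≤ -(r x * deriv u x) := by
    have h1 := hGumono hxb
    simp only [] at h1
    have h2 : r b * deriv u b ≤ 0 := mul_nonpos_of_nonneg_of_nonpos (hrpos b).le (hu' b)
    nlinarith [hUdiff]
  have hIu : s x * u x ≤ Real.exp 1 * ∫ t in x..b, u t := by
    have h1 := intervalIntegral.integral_mono_on (μ := volume) hxb
      (_root_.intervalIntegrable_const (c := u x)) ((continuous_const.mul hud.continuous).intervalIntegrable x b) hu_low
    simp only [Pi.mul_apply] at h1
    rw [intervalIntegral.integral_const, intervalIntegral.integral_const_mul, smul_eq_mul] at h1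
    have h2 : b - x = s x := by rw [hb]; ring
    rw [h2] at h1
    exact h1
  have e2 : σ * (s x * u x) ≤ Real.exp 1 * (-(r x * deriv u x)) := by
    calc σ * (s x * u x) ≤ σ * (Real.exp 1 * ∫ t in x..b, u t) := by nlinarith
      _ = Real.exp 1 * (σ * ∫ t in x..b, u t) := by ring
      _ ≤ Real.exp 1 * (-(r x * deriv u x)) := by nlinarith [Real.exp_pos 1]
  -- combine
  have hW1 : Real.exp 1 * (r x * (deriv v x * u x - deriv u x * v x)) = Real.exp 1 := by
    rw [hW x, mul_one]
  have hfin : ρ x * s x * (2 * σ) ≤ Real.exp 1 := by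
    rw [hρ x]
    nlinarith [mul_le_mul_of_nonneg_right e1 (hupos x).le,
      mul_le_mul_of_nonneg_right e2 (hvpos x).le]
  rw [le_div_iff₀ (by linarith : (0:ℝ) < 2 * σ)]
  exact hfin
end

section
/- Suppose sup_{x∈ℝ} r(x) ρ(x)² < ∞, where ρ is the generating function of a PFSS of (r z')' = q z. Then sup_{x∈ℝ} ρ(x) s(x) < ∞, where s(x) is the unique positive solution of ∫_{x-s}^{x+s} dt/(r ρ) = 1. -/
open MeasureTheory Filter Set intervalIntegral

theorem stmt13 (r q u v ρ s : ℝ → ℝ) (h : IsPFSS r q u v)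
    (hρ : ∀ x, ρ x = u x * v x)
    (hs : ∀ x, 0 < s x ∧ (∫ t in (x - s x)..(x + s x), 1 / (r t * ρ t)) = 1)
    (σ₁ : ℝ) (hσ₁ : ∀ x, r x * ρ x ^ 2 ≤ σ₁) :
    ∃ C : ℝ, ∀ x, ρ x * s x ≤ C := by
  obtain ⟨hu, hv, hupos, hvpos, hu', hv', hW, -, -⟩ := h
  have hρfun : ρ = fun x => u x * v x := funext hρ
  have hρpos : ∀ x, 0 < ρ x := fun x => (hρ x).symm ▸ mul_pos (hupos x) (hvpos x)
  have hρdiff : Differentiable ℝ ρ := hρfun ▸ hu.1.mul hv.1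
  have hρderiv : ∀ x, deriv ρ x = deriv u x * v x + u x * deriv v x := by
    intro x
    rw [hρfun]
    exact deriv_mul (hu.1 x) (hv.1 x)
  have hrpos : ∀ x, 0 < r x := by
    intro x
    by_contra hc
    push_neg at hc
    nlinarith [hW x, mul_nonneg (hv' x) (hupos x).le,
      mul_nonpos_of_nonpos_of_nonneg (hu' x) (hvpos x).le]
  -- |ρ'| ≤ 1/r
  have hbound : ∀ t, |deriv ρ t| ≤ 1 / r t := by
    intro t
    rw [abs_le]
    constructor
    · rw [show -(1 / r t) = (-1) / r t by ring, div_le_iff₀ (hrpos t), hρderiv t]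
      nlinarith [hW t, mul_nonneg (mul_nonneg (hrpos t).le (hupos t).le) (hv' t)]
    · rw [le_div_iff₀ (hrpos t), hρderiv t]
      nlinarith [hW t, mul_nonpos_of_nonpos_of_nonneg
        (mul_nonpos_of_nonpos_of_nonneg (hu' t) (hvpos t).le) (hrpos t).le]
  have hσpos : 0 < σ₁ :=
    lt_of_lt_of_le (mul_pos (hrpos 0) (pow_pos (hρpos 0) 2)) (hσ₁ 0)
  have hE : 0 < Real.exp 1 * σ₁ := by positivity
  refine ⟨Real.exp 1 * σ₁ / 2, fun x => ?_⟩
  obtain ⟨hsx, hint1⟩ := hs x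
  set a := x - s x with ha
  set b := x + s x with hb
  have hax : a ≤ x := by simp [ha]; linarith
  have hxb : x ≤ b := by simp [hb]; linarith
  have hab : a ≤ b := hax.trans hxb
  set φ : ℝ → ℝ := fun t => 1 / (r t * ρ t) with hφ
  have hφpos : ∀ t, 0 < φ t := fun t => by
    have := mul_pos (hrpos t) (hρpos t); positivity
  have hint : IntervalIntegrable φ volume a b := by
    by_contra hc
    rw [intervalIntegral.integral_undef hc] at hint1
    norm_num at hint1
  -- log-derivative of ρ
  have hlogd : ∀ t, HasDerivAt (fun y => Real.log (ρ y)) (deriv ρ t / ρ t) t :=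
    fun t => ((hρdiff t).hasDerivAt).log (hρpos t).ne'
  have hlogcont : Continuous fun y => Real.log (ρ y) :=
    Real.continuousOn_log.comp_continuous hρdiff.continuous fun t => (hρpos t).ne'
  have hφbound : ∀ t, |deriv ρ t / ρ t| ≤ φ t := by
    intro t
    have h1 : φ t = (1 / r t) / ρ t := by
      rw [hφ]; field_simp
    rw [abs_div, abs_of_pos (hρpos t), h1]
    exact (div_le_div_iff_of_pos_right (hρpos t)).2 (hbound t)
  -- comparison: ρ t ≥ exp(-1) ρ x on [a,b]
  have hcomp : ∀ t ∈ Icc a b, Real.exp (-1) * ρ x ≤ ρ t := by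
    intro t ht
    have key : Real.log (ρ x) - Real.log (ρ t) ≤ 1 := by
      rcases le_total t x with htx | hxt
      · -- use g = log ρ on [t, x]
        have hsub : ∫ y in t..x, φ y ≤ ∫ y in a..b, φ y :=
          intervalIntegral.integral_mono_interval ht.1 htx hxb
            (Filter.Eventually.of_forall fun y => (hφpos y).le) hint
        have hmono : IntervalIntegrable φ volume t x := by
          apply hint.mono_set
          rw [Set.uIcc_of_le htx, Set.uIcc_of_le hab]
          exact Set.Icc_subset_Icc ht.1 hxb
        have hle := intervalIntegral.sub_le_integral_of_hasDeriv_right_of_le htx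
          (hlogcont.continuousOn) (g' := fun y => deriv ρ y / ρ y)
          (fun y _ => (hlogd y).hasDerivWithinAt)
          ((integrableOn_Icc_iff_integrableOn_Ioc).2 hmono.1)
          (fun y _ => (abs_le.1 (hφbound y)).2)
        rw [hint1] at hsub
        linarith
      · -- use g = -log ρ on [x, t]
        have hsub : ∫ y in x..t, φ y ≤ ∫ y in a..b, φ y :=
          intervalIntegral.integral_mono_interval hax hxt ht.2
            (Filter.Eventually.of_forall fun y => (hφpos y).le) hint
        have hmono : IntervalIntegrable φ volume x t := by
          apply hint.mono_set
          rw [Set.uIcc_of_le hxt, Set.uIcc_of_le hab]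
          exact Set.Icc_subset_Icc hax ht.2
        have hle := intervalIntegral.sub_le_integral_of_hasDeriv_right_of_le hxt
          (g := fun y => -Real.log (ρ y)) (g' := fun y => -(deriv ρ y / ρ y))
          (hlogcont.neg.continuousOn)
          (fun y _ => ((hlogd y).neg).hasDerivWithinAt)
          ((integrableOn_Icc_iff_integrableOn_Ioc).2 hmono.1)
          (fun y _ => by
            have := (abs_le.1 (hφbound y)).1; linarith)
        rw [hint1] at hsub
        simp only [neg_sub_neg] at hle
        linarith
    have : ρ x ≤ Real.exp 1 * ρ t := by
      calc ρ x = Real.exp (Real.log (ρ x)) := (Real.exp_log (hρpos x)).symm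
        _ ≤ Real.exp (1 + Real.log (ρ t)) := Real.exp_le_exp.2 (by linarith)
        _ = Real.exp 1 * ρ t := by rw [Real.exp_add, Real.exp_log (hρpos t)]
    have hexp : Real.exp (-1) * Real.exp 1 = 1 := by
      rw [← Real.exp_add]; norm_num
    calc Real.exp (-1) * ρ x
        ≤ Real.exp (-1) * (Real.exp 1 * ρ t) :=
          mul_le_mul_of_nonneg_left this (Real.exp_pos (-1)).le
      _ = ρ t := by rw [← mul_assoc, hexp, one_mul]
  -- lower bound for φ on [a,b]
  have hφlow : ∀ t ∈ Icc a b, ρ x / (Real.exp 1 * σ₁) ≤ φ t := by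
    intro t ht
    have h1 : r t * ρ t ≤ Real.exp 1 * σ₁ / ρ x := by
      rw [le_div_iff₀ (hρpos x)]
      have h2 : r t * ρ t * ρ t ≤ σ₁ := by nlinarith [hσ₁ t, sq_nonneg (ρ t)]
      nlinarith [hcomp t ht, mul_pos (hrpos t) (hρpos t), Real.exp_pos (-1),
        (by rw [← Real.exp_add]; norm_num : Real.exp (-1) * Real.exp 1 = 1)]
    have := one_div_le_one_div_of_le (mul_pos (hrpos t) (hρpos t)) h1
    rwa [one_div_div] at this
  -- integrate
  have hmain : (b - a) * (ρ x / (Real.exp 1 * σ₁)) ≤ 1 := by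
    have := intervalIntegral.integral_mono_on hab
      (_root_.intervalIntegrable_const (c := ρ x / (Real.exp 1 * σ₁))) hint hφlow
    rwa [intervalIntegral.integral_const, smul_eq_mul, hint1] at this
  have hba : b - a = 2 * s x := by rw [ha, hb]; ring
  rw [hba] at hmain
  have h5 : 2 * s x * (ρ x / (Real.exp 1 * σ₁)) = (2 * s x * ρ x) / (Real.exp 1 * σ₁) := by
    ring
  rw [h5, div_le_one hE] at hmain
  linarith
end

section
/- Let r > 0 with 1/r ∈ L¹(ℝ) and suppose (r z')' = q z has a PFSS {u, v}. Then ρ(x) = u(x)v(x) ≤ τ · (∫_{-∞}^x dt/r(t)) · (∫_x^∞ dt/r(t)) for all x ∈ ℝ, where τ = max{(∫_{-∞}^0 dt/r)⁻¹, (∫_0^∞ dt/r)⁻¹}. -/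
open MeasureTheory Filter Set intervalIntegral

theorem stmt14 (r q u v : ℝ → ℝ) (h : IsPFSS r q u v)
    (hint : Integrable (fun t => 1 / r t)) :
    ∀ x : ℝ, u x * v x ≤
      max (∫ t in Iic (0:ℝ), 1 / r t)⁻¹ (∫ t in Ioi (0:ℝ), 1 / r t)⁻¹ *
        ((∫ t in Iic x, 1 / r t) * (∫ t in Ioi x, 1 / r t)) := by
  obtain ⟨hu, hv, hup, hvp, hud, hvd, hw, htop, hbot⟩ := h
  have hudiff : Differentiable ℝ u := hu.1
  have hvdiff : Differentiable ℝ v := hv.1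
  have hr : ∀ x, 0 < r x := by
    intro x
    have h1 := hw x
    nlinarith [hup x, hvp x, hud x, hvd x,
      mul_nonneg (hvd x) (hup x).le, mul_nonpos_of_nonpos_of_nonneg (hud x) (hvp x).le]
  have hrinv : ∀ x, (0:ℝ) < 1 / r x := fun x => one_div_pos.mpr (hr x)
  have hD : ∀ x, deriv v x * u x - deriv u x * v x = 1 / r x := by
    intro x
    have h1 := hw x
    have h0 : r x ≠ 0 := (hr x).ne'
    field_simp
    linarith [h1]
  have hua : Antitone u := antitone_of_deriv_nonpos hudiff hud
  have hvm : Monotone v := monotone_of_deriv_nonneg hvdiff hvd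
  -- derivatives of quotients
  have hVU : ∀ x, HasDerivAt (fun y => v y / u y) (1 / (r x * u x ^ 2)) x := by
    intro x
    have h1 := ((hvdiff x).hasDerivAt.div (hudiff x).hasDerivAt (hup x).ne')
    refine h1.congr_deriv ?_
    rw [show deriv v x * u x - v x * deriv u x = 1 / r x from by rw [← hD x]; ring, div_div]
  have hUV : ∀ x, HasDerivAt (fun y => u y / v y) (-(1 / (r x * v x ^ 2))) x := by
    intro x
    have h1 := ((hudiff x).hasDerivAt.div (hvdiff x).hasDerivAt (hvp x).ne')
    refine h1.congr_deriv ?_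
    rw [show deriv u x * v x - u x * deriv v x = -(1 / r x) from by rw [← hD x]; ring,
      neg_div, div_div]
  -- integrability facts
  have hii : ∀ a b : ℝ, IntervalIntegrable (fun t => 1 / r t) volume a b :=
    fun a b => hint.intervalIntegrable
  have hIru : ∀ a b : ℝ, IntervalIntegrable (fun t => 1 / (r t * u t ^ 2)) volume a b := by
    intro a b
    have hc : ContinuousOn (fun t => 1 / u t ^ 2) (uIcc a b) := by
      apply ContinuousOn.div continuousOn_const
      · exact ((hudiff.continuous.pow 2).continuousOn)
      · intro t _; exact pow_ne_zero 2 (hup t).ne'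
    have := (hii a b).mul_continuousOn hc
    have heq : (fun t => 1 / r t * (1 / u t ^ 2)) = fun t => 1 / (r t * u t ^ 2) := by
      funext t; rw [div_mul_div_comm, one_mul]
    rwa [heq] at this
  have hIrv : ∀ a b : ℝ, IntervalIntegrable (fun t => 1 / (r t * v t ^ 2)) volume a b := by
    intro a b
    have hc : ContinuousOn (fun t => 1 / v t ^ 2) (uIcc a b) := by
      apply ContinuousOn.div continuousOn_const
      · exact ((hvdiff.continuous.pow 2).continuousOn)
      · intro t _; exact pow_ne_zero 2 (hvp t).ne'
    have := (hii a b).mul_continuousOn hc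
    have heq : (fun t => 1 / r t * (1 / v t ^ 2)) = fun t => 1 / (r t * v t ^ 2) := by
      funext t; rw [div_mul_div_comm, one_mul]
    rwa [heq] at this
  -- key bound via Iic
  have hA : ∀ x : ℝ, u x * v x ≤ ∫ t in Iic x, 1 / r t := by
    intro x
    have key : ∀ a, a ≤ x → u x * v x ≤ (∫ t in Iic x, 1 / r t) + u x ^ 2 * (v a / u a) := by
      intro a ha
      have hftc : ∫ t in a..x, 1 / (r t * u t ^ 2) = v x / u x - v a / u a :=
        integral_eq_sub_of_hasDerivAt (fun t _ => hVU t) (hIru a x)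
      have hmono : ∫ t in a..x, 1 / (r t * u t ^ 2)
          ≤ ∫ t in a..x, (1 / u x ^ 2) * (1 / r t) := by
        apply intervalIntegral.integral_mono_on ha (hIru a x) ((hii a x).const_mul _)
        intro t ht
        have h1 : u x ≤ u t := hua ht.2
        have h2 : (0:ℝ) < r t * u x ^ 2 := mul_pos (hr t) (pow_pos (hup x) 2)
        rw [show (1 / u x ^ 2) * (1 / r t) = 1 / (r t * u x ^ 2) by
          rw [div_mul_div_comm, one_mul, mul_comm]]
        apply one_div_le_one_div_of_le h2
        have : u x ^ 2 ≤ u t ^ 2 := by nlinarith [hup x]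
        nlinarith [hr t]
      have hconst : ∫ t in a..x, (1 / u x ^ 2) * (1 / r t)
          = (1 / u x ^ 2) * ∫ t in a..x, 1 / r t :=
        intervalIntegral.integral_const_mul _ _
      have hsub : ∫ t in a..x, 1 / r t ≤ ∫ t in Iic x, 1 / r t := by
        rw [intervalIntegral.integral_of_le ha]
        apply setIntegral_mono_set hint.integrableOn
          (Filter.Eventually.of_forall fun t => (hrinv t).le)
          (HasSubset.Subset.eventuallyLE Ioc_subset_Iic_self)
      have h3 : v x / u x - v a / u a ≤ (1 / u x ^ 2) * ∫ t in Iic x, 1 / r t := by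
        rw [← hftc]
        calc ∫ t in a..x, 1 / (r t * u t ^ 2)
            ≤ (1 / u x ^ 2) * ∫ t in a..x, 1 / r t := by rw [← hconst]; exact hmono
          _ ≤ (1 / u x ^ 2) * ∫ t in Iic x, 1 / r t := by
              apply mul_le_mul_of_nonneg_left hsub; positivity
      have hux : (0:ℝ) < u x := hup x
      have h5 : u x ^ 2 * (v x / u x - v a / u a) ≤ ∫ t in Iic x, 1 / r t := by
        calc u x ^ 2 * (v x / u x - v a / u a)
            ≤ u x ^ 2 * (1 / u x ^ 2 * ∫ t in Iic x, 1 / r t) :=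
              mul_le_mul_of_nonneg_left h3 (sq_nonneg _)
          _ = ∫ t in Iic x, 1 / r t := by
              rw [← mul_assoc, mul_one_div, div_self (pow_ne_zero 2 hux.ne'), one_mul]
      have h6 : u x ^ 2 * (v x / u x - v a / u a)
          = u x * v x - u x ^ 2 * (v a / u a) := by field_simp
      rw [h6] at h5
      linarith
    have hlim : Tendsto (fun a => (∫ t in Iic x, 1 / r t) + u x ^ 2 * (v a / u a))
        atBot (nhds ((∫ t in Iic x, 1 / r t) + u x ^ 2 * 0)) :=
      tendsto_const_nhds.add (tendsto_const_nhds.mul hbot)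
    have := ge_of_tendsto hlim (eventually_atBot.2 ⟨x, fun a ha => key a ha⟩)
    simpa using this
  -- key bound via Ioi
  have hB : ∀ x : ℝ, u x * v x ≤ ∫ t in Ioi x, 1 / r t := by
    intro x
    have key : ∀ b, x ≤ b → u x * v x ≤ (∫ t in Ioi x, 1 / r t) + v x ^ 2 * (u b / v b) := by
      intro b hb
      have hftc0 : ∫ t in x..b, -(1 / (r t * v t ^ 2)) = u b / v b - u x / v x :=
        integral_eq_sub_of_hasDerivAt (fun t _ => hUV t) (hIrv x b).neg
      have hftc : ∫ t in x..b, 1 / (r t * v t ^ 2) = u x / v x - u b / v b := by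
        have := hftc0
        rw [intervalIntegral.integral_neg] at this
        linarith
      have hmono : ∫ t in x..b, 1 / (r t * v t ^ 2)
          ≤ ∫ t in x..b, (1 / v x ^ 2) * (1 / r t) := by
        apply intervalIntegral.integral_mono_on hb (hIrv x b) ((hii x b).const_mul _)
        intro t ht
        have h1 : v x ≤ v t := hvm ht.1
        have h2 : (0:ℝ) < r t * v x ^ 2 := mul_pos (hr t) (pow_pos (hvp x) 2)
        rw [show (1 / v x ^ 2) * (1 / r t) = 1 / (r t * v x ^ 2) by
          rw [div_mul_div_comm, one_mul, mul_comm]]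
        apply one_div_le_one_div_of_le h2
        have : v x ^ 2 ≤ v t ^ 2 := by nlinarith [hvp x]
        nlinarith [hr t]
      have hconst : ∫ t in x..b, (1 / v x ^ 2) * (1 / r t)
          = (1 / v x ^ 2) * ∫ t in x..b, 1 / r t :=
        intervalIntegral.integral_const_mul _ _
      have hsub : ∫ t in x..b, 1 / r t ≤ ∫ t in Ioi x, 1 / r t := by
        rw [intervalIntegral.integral_of_le hb]
        apply setIntegral_mono_set hint.integrableOn
          (Filter.Eventually.of_forall fun t => (hrinv t).le)
          (HasSubset.Subset.eventuallyLE Ioc_subset_Ioi_self)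
      have h3 : u x / v x - u b / v b ≤ (1 / v x ^ 2) * ∫ t in Ioi x, 1 / r t := by
        rw [← hftc]
        calc ∫ t in x..b, 1 / (r t * v t ^ 2)
            ≤ (1 / v x ^ 2) * ∫ t in x..b, 1 / r t := by rw [← hconst]; exact hmono
          _ ≤ (1 / v x ^ 2) * ∫ t in Ioi x, 1 / r t := by
              apply mul_le_mul_of_nonneg_left hsub; positivity
      have hvx : (0:ℝ) < v x := hvp x
      have h5 : v x ^ 2 * (u x / v x - u b / v b) ≤ ∫ t in Ioi x, 1 / r t := by
        calc v x ^ 2 * (u x / v x - u b / v b)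
            ≤ v x ^ 2 * (1 / v x ^ 2 * ∫ t in Ioi x, 1 / r t) :=
              mul_le_mul_of_nonneg_left h3 (sq_nonneg _)
          _ = ∫ t in Ioi x, 1 / r t := by
              rw [← mul_assoc, mul_one_div, div_self (pow_ne_zero 2 hvx.ne'), one_mul]
      have h6 : v x ^ 2 * (u x / v x - u b / v b)
          = u x * v x - v x ^ 2 * (u b / v b) := by field_simp
      rw [h6] at h5
      linarith
    have hlim : Tendsto (fun b => (∫ t in Ioi x, 1 / r t) + v x ^ 2 * (u b / v b))
        atTop (nhds ((∫ t in Ioi x, 1 / r t) + v x ^ 2 * 0)) :=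
      tendsto_const_nhds.add (tendsto_const_nhds.mul htop)
    have := ge_of_tendsto hlim (eventually_atTop.2 ⟨x, fun b hb => key b hb⟩)
    simpa using this
  -- positivity of the integrals
  have hsupp : Function.support (fun t => 1 / r t) = univ :=
    eq_univ_of_forall fun t => (hrinv t).ne'
  have hposIic : ∀ x : ℝ, 0 < ∫ t in Iic x, 1 / r t := by
    intro x
    rw [setIntegral_pos_iff_support_of_nonneg_ae
      (Filter.Eventually.of_forall fun t => (hrinv t).le) hint.integrableOn]
    rw [hsupp, univ_inter, Real.volume_Iic]
    exact ENNReal.zero_lt_top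
  have hposIoi : ∀ x : ℝ, 0 < ∫ t in Ioi x, 1 / r t := by
    intro x
    rw [setIntegral_pos_iff_support_of_nonneg_ae
      (Filter.Eventually.of_forall fun t => (hrinv t).le) hint.integrableOn]
    rw [hsupp, univ_inter, Real.volume_Ioi]
    exact ENNReal.zero_lt_top
  -- conclusion
  intro x
  set A0 := ∫ t in Iic (0:ℝ), 1 / r t with hA0
  set B0 := ∫ t in Ioi (0:ℝ), 1 / r t with hB0
  set Ax := ∫ t in Iic x, 1 / r t with hAx
  set Bx := ∫ t in Ioi x, 1 / r t with hBx
  have hA0p : 0 < A0 := hposIic 0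
  have hB0p : 0 < B0 := hposIoi 0
  have hAxp : 0 < Ax := hposIic x
  have hBxp : 0 < Bx := hposIoi x
  rcases le_total 0 x with hx | hx
  · -- A0 ≤ Ax, use uv ≤ Bx
    have hAA : A0 ≤ Ax := by
      apply setIntegral_mono_set hint.integrableOn
        (Filter.Eventually.of_forall fun t => (hrinv t).le)
        (HasSubset.Subset.eventuallyLE (Iic_subset_Iic.2 hx))
    calc u x * v x ≤ Bx := hB x
      _ = A0⁻¹ * (A0 * Bx) := by field_simp
      _ ≤ A0⁻¹ * (Ax * Bx) := by
          apply mul_le_mul_of_nonneg_left _ (by positivity)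
          exact mul_le_mul_of_nonneg_right hAA hBxp.le
      _ ≤ max A0⁻¹ B0⁻¹ * (Ax * Bx) :=
          mul_le_mul_of_nonneg_right (le_max_left _ _) (by positivity)
  · -- B0 ≤ Bx, use uv ≤ Ax
    have hBB : B0 ≤ Bx := by
      apply setIntegral_mono_set hint.integrableOn
        (Filter.Eventually.of_forall fun t => (hrinv t).le)
        (HasSubset.Subset.eventuallyLE (Ioi_subset_Ioi hx))
    calc u x * v x ≤ Ax := hA x
      _ = B0⁻¹ * (Ax * B0) := by field_simp
      _ ≤ B0⁻¹ * (Ax * Bx) := by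
          apply mul_le_mul_of_nonneg_left _ (by positivity)
          exact mul_le_mul_of_nonneg_left hBB hAxp.le
      _ ≤ max A0⁻¹ B0⁻¹ * (Ax * Bx) :=
          mul_le_mul_of_nonneg_right (le_max_right _ _) (by positivity)
end

section
/- Let r(x) = (1+x²)^α with 1/2 < α < 1, and let ρ(x) = (1/w₀) ∫_{-∞}^x dt/r(t) · ∫_x^∞ dt/r(t) with w₀ = ∫_ℝ dt/r(t). Then ρ(x)|x|^{2α-1} → 1/(2α-1) as |x| → ∞. -/
open MeasureTheory Filter Set intervalIntegral

namespace Stmt16Aux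
open Real

noncomputable def f (α : ℝ) (x : ℝ) : ℝ := (1 + x ^ 2) ^ (-α)

lemma f_pos (α x : ℝ) : 0 < f α x := Real.rpow_pos_of_pos (by positivity) _

lemma f_even (α x : ℝ) : f α (-x) = f α x := by simp [f]

lemma one_div_r (α x : ℝ) : 1 / ((1 + x ^ 2) ^ α) = f α x := by
  rw [f, Real.rpow_neg (by positivity), one_div]

lemma f_int {α : ℝ} (hα1 : 1 / 2 < α) : Integrable (f α) := by
  have h := integrable_rpow_neg_one_add_norm_sq (E := ℝ) (μ := volume) (r := 2 * α)
    (by simp [Module.finrank_self]; linarith)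
  have : (fun x : ℝ => ((1 : ℝ) + ‖x‖ ^ 2) ^ (-(2*α) / 2)) = f α := by
    funext x
    rw [f, Real.norm_eq_abs, sq_abs]
    ring_nf
  rwa [this] at h

lemma tail {α : ℝ} (hα1 : 1 / 2 < α) (hα2 : α < 1) :
    Tendsto (fun x : ℝ => (∫ t in Ioi x, f α t) * x ^ (2 * α - 1)) atTop
      (nhds (1 / (2 * α - 1))) := by
  have hαpos : (0:ℝ) < α := by linarith
  have h2α : (-(2 * α) : ℝ) < -1 := by linarith
  have hden : (0:ℝ) < 2 * α - 1 := by linarith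
  have hlow : Tendsto (fun x : ℝ => (1 + x⁻¹ ^ 2) ^ (-α) / (2 * α - 1)) atTop
      (nhds (1 / (2 * α - 1))) := by
    have h1 : Tendsto (fun x : ℝ => 1 + x⁻¹ ^ 2) atTop (nhds 1) := by
      have h0 : Tendsto (fun x : ℝ => x⁻¹ ^ 2) atTop (nhds (0 ^ 2)) :=
        (tendsto_inv_atTop_zero (𝕜 := ℝ)).pow 2
      simpa using tendsto_const_nhds.add h0
    have := (h1.rpow_const (Or.inl one_ne_zero) (p := -α)).div_const (2 * α - 1)
    simpa using this
  refine tendsto_of_tendsto_of_tendsto_of_le_of_le' hlow tendsto_const_nhds ?_ ?_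
  · -- lower bound
    filter_upwards [eventually_ge_atTop (1:ℝ)] with x hx
    have hx0 : (0:ℝ) < x := by linarith
    have hE : (∫ t in Ioi x, t ^ (-(2*α))) = x ^ (1 - 2*α) / (2*α - 1) := by
      rw [integral_Ioi_rpow_of_lt h2α hx0]
      rw [show -(2*α) + 1 = 1 - 2*α by ring, div_eq_div_iff (by linarith) (by positivity)]
      ring
    have hEx : x ^ (1 - 2*α) * x ^ (2*α - 1) = 1 := by
      rw [← Real.rpow_add hx0]; norm_num
    have hmono : (∫ t in Ioi x, (1 + x⁻¹ ^ 2) ^ (-α) * t ^ (-(2*α)))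
        ≤ ∫ t in Ioi x, f α t := by
      apply setIntegral_mono_on
        ((integrableOn_Ioi_rpow_of_lt h2α hx0).const_mul _)
        ((f_int hα1).integrableOn) measurableSet_Ioi
      intro t ht
      have ht0 : (0:ℝ) < t := hx0.trans ht
      have h1 : (1 + x⁻¹ ^ 2) ^ (-α) * t ^ (-(2*α)) = ((1 + x⁻¹ ^ 2) * t ^ 2) ^ (-α) := by
        rw [Real.mul_rpow (by positivity) (by positivity)]
        congr 1
        rw [← Real.rpow_natCast t 2, ← Real.rpow_mul ht0.le]
        norm_num
      rw [h1, f]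
      apply Real.rpow_le_rpow_of_nonpos (by positivity) _ (by linarith)
      have hx2 : 1 ≤ t ^ 2 * x⁻¹ ^ 2 := by
        rw [← mul_pow]
        have : 1 ≤ t * x⁻¹ := by
          rw [← div_eq_mul_inv, le_div_iff₀ hx0]
          linarith [(show x < t from ht).le]
        nlinarith
      nlinarith
    calc (1 + x⁻¹ ^ 2) ^ (-α) / (2*α - 1)
        = (∫ t in Ioi x, (1 + x⁻¹ ^ 2) ^ (-α) * t ^ (-(2*α))) * x ^ (2*α - 1) := by
          rw [MeasureTheory.integral_const_mul, hE]
          have : (1 + x⁻¹ ^ 2) ^ (-α) * (x ^ (1 - 2*α) / (2*α - 1)) * x ^ (2*α - 1)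
              = (1 + x⁻¹ ^ 2) ^ (-α) * (x ^ (1 - 2*α) * x ^ (2*α - 1)) / (2*α - 1) := by
            ring
          rw [this, hEx, mul_one]
      _ ≤ (∫ t in Ioi x, f α t) * x ^ (2*α - 1) :=
          mul_le_mul_of_nonneg_right hmono (Real.rpow_nonneg hx0.le _)
  · -- upper bound
    filter_upwards [eventually_ge_atTop (1:ℝ)] with x hx
    have hx0 : (0:ℝ) < x := by linarith
    have hE : (∫ t in Ioi x, t ^ (-(2*α))) = x ^ (1 - 2*α) / (2*α - 1) := by
      rw [integral_Ioi_rpow_of_lt h2α hx0]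
      rw [show -(2*α) + 1 = 1 - 2*α by ring, div_eq_div_iff (by linarith) (by positivity)]
      ring
    have hEx : x ^ (1 - 2*α) * x ^ (2*α - 1) = 1 := by
      rw [← Real.rpow_add hx0]; norm_num
    have hmono : (∫ t in Ioi x, f α t) ≤ ∫ t in Ioi x, t ^ (-(2*α)) := by
      apply setIntegral_mono_on ((f_int hα1).integrableOn)
        (integrableOn_Ioi_rpow_of_lt h2α hx0) measurableSet_Ioi
      intro t ht
      have ht0 : (0:ℝ) < t := hx0.trans ht
      have h1 : t ^ (-(2*α)) = (t ^ 2 : ℝ) ^ (-α) := by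
        rw [← Real.rpow_natCast t 2, ← Real.rpow_mul ht0.le]
        norm_num
      rw [h1, f]
      apply Real.rpow_le_rpow_of_nonpos (by positivity) (by nlinarith) (by linarith)
    calc (∫ t in Ioi x, f α t) * x ^ (2*α - 1)
        ≤ (∫ t in Ioi x, t ^ (-(2*α))) * x ^ (2*α - 1) :=
          mul_le_mul_of_nonneg_right hmono (Real.rpow_nonneg hx0.le _)
      _ = 1 / (2*α - 1) := by rw [hE, div_mul_eq_mul_div, hEx]

end Stmt16Aux

namespace Stmt16Aux

lemma w0_pos {α : ℝ} (hα1 : 1 / 2 < α) : 0 < ∫ t, f α t := by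
  rw [MeasureTheory.integral_pos_iff_support_of_nonneg
    (fun x => (f_pos α x).le) (f_int hα1)]
  have : Function.support (f α) = Set.univ :=
    Set.eq_univ_of_forall fun x => (f_pos α x).ne'
  simp [this]

lemma tendsto_Ioi_zero {α : ℝ} (hα1 : 1 / 2 < α) (hα2 : α < 1) :
    Tendsto (fun x : ℝ => ∫ t in Ioi x, f α t) atTop (nhds 0) := by
  have hden : (0:ℝ) < 2 * α - 1 := by linarith
  have h := (tail hα1 hα2).mul (tendsto_rpow_neg_atTop hden)
  rw [mul_zero] at h
  apply h.congr'
  filter_upwards [eventually_gt_atTop (0:ℝ)] with x hx0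
  rw [mul_assoc, ← Real.rpow_add hx0]
  simp

lemma tendsto_Iic {α : ℝ} (hα1 : 1 / 2 < α) (hα2 : α < 1) :
    Tendsto (fun x : ℝ => ∫ t in Iic x, f α t) atTop (nhds (∫ t, f α t)) := by
  have h := (tendsto_const_nhds (x := ∫ t, f α t) (f := atTop)).sub
    (tendsto_Ioi_zero hα1 hα2)
  rw [sub_zero] at h
  apply h.congr
  intro x
  have := integral_Iic_add_Ioi (μ := volume) ((f_int hα1).integrableOn)
    ((f_int hα1).integrableOn) (b := x)
  linarith [this]

end Stmt16Aux

open Stmt16Aux in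
theorem stmt16 (α : ℝ) (hα1 : 1 / 2 < α) (hα2 : α < 1) (r : ℝ → ℝ)
    (hr : ∀ x, r x = (1 + x ^ 2) ^ α) (w₀ : ℝ) (hw : w₀ = ∫ t, 1 / r t) (ρ : ℝ → ℝ)
    (hρ : ∀ x, ρ x = (1 / w₀) * ((∫ t in Iic x, 1 / r t) * (∫ t in Ioi x, 1 / r t))) :
    Tendsto (fun x => ρ x * |x| ^ (2 * α - 1)) atTop (nhds (1 / (2 * α - 1))) ∧
    Tendsto (fun x => ρ x * |x| ^ (2 * α - 1)) atBot (nhds (1 / (2 * α - 1))) := by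
  simp only [hr, one_div_r] at hw hρ
  have hw0 : 0 < w₀ := hw ▸ w0_pos hα1
  have hTop : Tendsto (fun x => ρ x * |x| ^ (2 * α - 1)) atTop (nhds (1 / (2 * α - 1))) := by
    have h : Tendsto (fun x : ℝ => (1 / w₀) * (∫ t in Iic x, f α t)
        * ((∫ t in Ioi x, f α t) * x ^ (2 * α - 1))) atTop
        (nhds ((1 / w₀) * (∫ t, f α t) * (1 / (2 * α - 1)))) :=
      ((tendsto_const_nhds.mul (tendsto_Iic hα1 hα2)).mul (tail hα1 hα2))
    have hval : (1 / w₀) * (∫ t, f α t) * (1 / (2 * α - 1)) = 1 / (2 * α - 1) := by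
      rw [← hw]
      field_simp
    rw [hval] at h
    apply h.congr'
    filter_upwards [eventually_gt_atTop (0:ℝ)] with x hx0
    rw [hρ x, abs_of_pos hx0]
    ring
  refine ⟨hTop, ?_⟩
  have hρeven : ∀ x, ρ (-x) = ρ x := by
    intro x
    have h1 := integral_comp_neg_Iic (-x) (f α)
    have h2 := integral_comp_neg_Ioi (-x) (f α)
    simp only [f_even, neg_neg] at h1 h2
    rw [hρ, hρ, h1, h2, mul_comm (∫ t in Ioi x, f α t)]
  have h := hTop.comp tendsto_neg_atBot_atTop
  apply h.congr
  intro x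
  simp only [Function.comp_apply, hρeven, abs_neg]
end

section
/- Let r(x) = (1+x²)^α with 1/2 < α < 1, ρ(x) = (1/w₀) ∫_{-∞}^x dt/r · ∫_x^∞ dt/r, and s(x) the unique positive solution of ∫_{x-s}^{x+s} dt/(r ρ) = 1. Then sup_{x∈ℝ} ρ(x) s(x) = ∞. -/
open MeasureTheory Filter Set intervalIntegral

open Real in

open Real in
lemma aux_cont {α : ℝ} (hα : 0 < α) : Continuous (fun t : ℝ => 1 / (1 + t^2) ^ α) := by
  have hpos : ∀ t : ℝ, (0:ℝ) < 1 + t^2 := fun t => by positivity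
  apply Continuous.div continuous_const
  · exact (continuous_const.add (continuous_pow 2)).rpow_const (fun t => Or.inl (hpos t).ne')
  · intro t
    exact (rpow_pos_of_pos (hpos t) α).ne'

open Real in
lemma aux_integrable {α : ℝ} (hα1 : 1/2 < α) (hα2 : α < 1) :
    Integrable (fun t : ℝ => 1 / (1 + t^2) ^ α) := by
  have hpos : ∀ t : ℝ, (0:ℝ) < 1 + t^2 := fun t => by positivity
  have hbig : Integrable (fun t : ℝ => (2:ℝ)^α * (1 + ‖t‖) ^ (-(2*α))) := by
    refine (integrable_one_add_norm (E := ℝ) ?_).const_mul _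
    simp only [Module.finrank_self, Nat.cast_one]
    linarith
  refine hbig.mono' ((aux_cont (by linarith)).aestronglyMeasurable) (.of_forall fun t => ?_)
  have h1 : (0:ℝ) < 1 + |t| := by positivity
  have key : (1 + |t|) ^ (2*α) ≤ 2^α * (1 + t^2) ^ α := by
    have h2 : (1 + |t|)^2 ≤ 2 * (1 + t^2) := by
      have := sq_abs t
      nlinarith [sq_nonneg (1 - |t|), abs_nonneg t]
    calc (1 + |t|) ^ (2*α) = ((1 + |t|)^2 : ℝ) ^ α := by
          rw [← rpow_natCast (1 + |t|) 2, ← rpow_mul h1.le]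
          norm_num [mul_comm]
      _ ≤ (2 * (1 + t^2)) ^ α := by
          apply rpow_le_rpow (by positivity) h2 (by linarith)
      _ = 2^α * (1 + t^2) ^ α := mul_rpow (by norm_num) (hpos t).le
  have h3 : (0:ℝ) < (1 + t^2) ^ α := rpow_pos_of_pos (hpos t) α
  have h4 : (0:ℝ) < (1 + |t|) ^ (2*α) := rpow_pos_of_pos h1 (2*α)
  have goal2 : 1 / (1 + t^2)^α ≤ 2^α * (1 + |t|) ^ (-(2*α)) := by
    rw [rpow_neg h1.le, ← one_div, mul_one_div, div_le_div_iff₀ h3 h4, one_mul]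
    linarith [key]
  simpa [norm_eq_abs, abs_of_nonneg h3.le, abs_of_nonneg (le_of_lt (div_pos one_pos h3))] using goal2

open Real in
lemma aux_pos {α : ℝ} (t : ℝ) : (0:ℝ) < 1 / (1 + t^2) ^ α :=
  div_pos one_pos (rpow_pos_of_pos (by positivity) α)

-- A(x) ≥ 1/2 for x ≥ 0
open Real in
lemma aux_A {α : ℝ} (hα1 : 1/2 < α) (hα2 : α < 1) {x : ℝ} (hx : 0 ≤ x) :
    (1:ℝ)/2 ≤ ∫ t in Iic x, 1 / (1 + t^2) ^ α := by
  have hInt := aux_integrable hα1 hα2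
  have h1 : ∫ t in Ioc (-1:ℝ) 0, 1 / (1 + t^2) ^ α ≤ ∫ t in Iic x, 1 / (1 + t^2) ^ α := by
    apply setIntegral_mono_set (hInt.integrableOn)
      (Filter.Eventually.of_forall fun t => (aux_pos t).le)
    apply Filter.Eventually.of_forall
    intro t ht
    exact le_trans ht.2 hx
  refine le_trans ?_ h1
  have h2 : ∫ t in Ioc (-1:ℝ) 0, (1:ℝ)/2 ≤ ∫ t in Ioc (-1:ℝ) 0, 1 / (1 + t^2) ^ α := by
    apply setIntegral_mono_on (integrableOn_const (by simp [Real.volume_Ioc]) (by simp))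
      hInt.integrableOn measurableSet_Ioc
    intro t ht
    have ht2 : t^2 ≤ 1 := by nlinarith [ht.1, ht.2]
    have : (1 + t^2 : ℝ) ^ α ≤ 2 := by
      calc (1 + t^2 : ℝ) ^ α ≤ (2:ℝ) ^ α := rpow_le_rpow (by positivity) (by linarith) (by linarith)
        _ ≤ (2:ℝ) ^ (1:ℝ) := rpow_le_rpow_of_exponent_le one_le_two hα2.le
        _ = 2 := rpow_one 2
    rw [div_le_div_iff₀ (by norm_num) (rpow_pos_of_pos (by positivity) α)]
    linarith
  refine le_trans (le_of_eq ?_) h2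
  rw [setIntegral_const]
  simp [Real.volume_Ioc]
-- B(x) ≥ cB * x^(1-2α) for x ≥ 1
open Real in
lemma aux_B {α : ℝ} (hα1 : 1/2 < α) (hα2 : α < 1) {x : ℝ} (hx : 1 ≤ x) :
    (2:ℝ)^(-α) * (1 - 2^(1-2*α)) / (2*α-1) * x^(1-2*α) ≤ ∫ t in Ioi x, 1 / (1 + t^2) ^ α := by
  have hInt := aux_integrable hα1 hα2
  have hx0 : (0:ℝ) < x := by linarith
  have hle : x ≤ 2*x := by linarith
  have h0n : (0:ℝ) ∉ uIcc x (2*x) := by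
    rw [uIcc_of_le hle]
    intro h
    exact absurd h.1 (by linarith)
  have hgInt : IntervalIntegrable (fun t : ℝ => (2:ℝ)^(-α) * t^(-(2*α))) volume x (2*x) :=
    (intervalIntegral.intervalIntegrable_rpow (Or.inr h0n)).const_mul _
  -- value of the model integral
  have hval : ∫ t in x..(2*x), (2:ℝ)^(-α) * t^(-(2*α))
      = (2:ℝ)^(-α) * (1 - 2^(1-2*α)) / (2*α-1) * x^(1-2*α) := by
    rw [intervalIntegral.integral_const_mul, integral_rpow (Or.inr ⟨by intro h; linarith, h0n⟩)]
    have h2x : ((2:ℝ)*x) ^ (-(2*α)+1) = 2^(-(2*α)+1) * x^(-(2*α)+1) :=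
      mul_rpow (by norm_num) hx0.le
    rw [h2x]
    have he : (-(2*α)+1 : ℝ) = 1-2*α := by ring
    rw [he]
    have hne : (2*α - 1 : ℝ) ≠ 0 := by intro h; rw [sub_eq_zero] at h; rw [← h] at hα1; norm_num at hα1
    have hne2 : (1 - 2*α : ℝ) ≠ 0 := by intro h; apply hne; linarith [sub_eq_zero.mp h]
    field_simp
    have hv : (-1 + α*2 : ℝ)⁻¹ = -(1 - α*2)⁻¹ := by
      rw [show (-1 + α*2 : ℝ) = -(1 - α*2) by ring, inv_neg]
    linear_combination (2^(1-α*2) - 1) * hv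
  have h1 : ∫ t in Ioc x (2*x), (2:ℝ)^(-α) * t^(-(2*α))
      ≤ ∫ t in Ioc x (2*x), 1 / (1 + t^2) ^ α := by
    apply setIntegral_mono_on
      ((intervalIntegrable_iff_integrableOn_Ioc_of_le hle).mp hgInt)
      hInt.integrableOn measurableSet_Ioc
    intro t ht
    have ht1 : 1 ≤ t := le_trans hx ht.1.le
    have ht0 : (0:ℝ) < t := by linarith
    have key : (1 + t^2 : ℝ) ^ α ≤ 2^α * t^(2*α) := by
      calc (1 + t^2 : ℝ) ^ α ≤ (2 * t^2 : ℝ) ^ α :=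
            rpow_le_rpow (by positivity) (by nlinarith) (by linarith)
        _ = 2^α * (t^2 : ℝ)^α := mul_rpow (by norm_num) (by positivity)
        _ = 2^α * t^(2*α) := by
            rw [← rpow_natCast t 2, ← rpow_mul ht0.le]
            norm_num [mul_comm]
    have hp1 : (0:ℝ) < (1 + t^2) ^ α := rpow_pos_of_pos (by positivity) α
    have hp2 : (0:ℝ) < t ^ (2*α) := rpow_pos_of_pos ht0 _
    rw [rpow_neg ht0.le, rpow_neg (by norm_num : (0:ℝ) ≤ 2)]
    rw [← one_div, ← one_div, mul_one_div, div_div, div_le_div_iff₀ (by positivity) hp1]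
    nlinarith [key]
  have h2 : ∫ t in Ioc x (2*x), 1 / (1 + t^2) ^ α ≤ ∫ t in Ioi x, 1 / (1 + t^2) ^ α := by
    apply setIntegral_mono_set hInt.integrableOn
      (Filter.Eventually.of_forall fun t => (aux_pos t).le)
    exact Filter.Eventually.of_forall fun t ht => ht.1
  calc (2:ℝ)^(-α) * (1 - 2^(1-2*α)) / (2*α-1) * x^(1-2*α)
      = ∫ t in x..(2*x), (2:ℝ)^(-α) * t^(-(2*α)) := hval.symm
    _ = ∫ t in Ioc x (2*x), (2:ℝ)^(-α) * t^(-(2*α)) := intervalIntegral.integral_of_le hle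
    _ ≤ ∫ t in Ioc x (2*x), 1 / (1 + t^2) ^ α := h1
    _ ≤ _ := h2
open Real in
theorem stmt17 (α : ℝ) (hα1 : 1 / 2 < α) (hα2 : α < 1) (r : ℝ → ℝ)
    (hr : ∀ x, r x = (1 + x ^ 2) ^ α) (w₀ : ℝ) (hw : w₀ = ∫ t, 1 / r t) (ρ s : ℝ → ℝ)
    (hρ : ∀ x, ρ x = (1 / w₀) * ((∫ t in Iic x, 1 / r t) * (∫ t in Ioi x, 1 / r t)))
    (hs : ∀ x, 0 < s x ∧ (∫ t in (x - s x)..(x + s x), 1 / (r t * ρ t)) = 1) :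
    ∀ C : ℝ, ∃ x, C < ρ x * s x := by
  have hα1' : 1/2 < α := hα1
  have hInt := aux_integrable hα1' hα2
  -- w₀ > 0
  have hw0 : 0 < w₀ := by
    rw [hw]
    simp only [hr]
    refine (integral_pos_iff_support_of_nonneg (fun t => (aux_pos t).le) hInt).2 ?_
    have hsupp : Function.support (fun t : ℝ => 1 / (1 + t^2) ^ α) = univ :=
      eq_univ_of_forall fun t => (aux_pos t).ne'
    rw [hsupp]
    simp
  set cB := (2:ℝ)^(-α) * (1 - 2^(1-2*α)) / (2*α-1) with hcBdef
  have hcB : 0 < cB := by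
    apply div_pos (mul_pos (rpow_pos_of_pos two_pos _) ?_) (by linarith)
    have : (2:ℝ)^(1-2*α) < 1 := Real.rpow_lt_one_of_one_lt_of_neg one_lt_two (by linarith)
    linarith
  set cρ := cB / (2*w₀) with hcρdef
  have hcρ : 0 < cρ := div_pos hcB (by linarith)
  -- lower bound on ρ
  have hρlb : ∀ x : ℝ, 1 ≤ x → cρ * x^(1-2*α) ≤ ρ x := by
    intro x hx
    rw [hρ x]
    simp only [hr]
    have hA := aux_A hα1' hα2 (by linarith : (0:ℝ) ≤ x)
    have hB := aux_B hα1' hα2 hx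
    have hxp : (0:ℝ) < x^(1-2*α) := Real.rpow_pos_of_pos (by linarith) _
    have hBnn : (0:ℝ) ≤ ∫ t in Ioi x, 1/(1+t^2)^α := le_trans (by positivity) hB
    calc cρ * x^(1-2*α) = (1/w₀) * ((1/2) * (cB * x^(1-2*α))) := by
          rw [hcρdef]; field_simp
      _ ≤ (1/w₀) * ((∫ t in Iic x, 1/(1+t^2)^α) * (∫ t in Ioi x, 1/(1+t^2)^α)) := by
          apply mul_le_mul_of_nonneg_left ?_ (by positivity)
          exact mul_le_mul hA hB (by positivity) (le_trans (by norm_num) hA)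
  -- lower bound on r * ρ
  have hrρ : ∀ t : ℝ, 1 ≤ t → cρ * t ≤ r t * ρ t := by
    intro t ht
    have ht0 : (0:ℝ) < t := by linarith
    have h1 : t ^ (2*α) ≤ r t := by
      rw [hr t]
      calc t ^ (2*α) = ((t^2 : ℝ)) ^ α := by
            rw [← Real.rpow_natCast t 2, ← Real.rpow_mul ht0.le]; norm_num [mul_comm]
        _ ≤ (1 + t^2) ^ α := Real.rpow_le_rpow (by positivity) (by linarith) (by linarith)
    have h2 := hρlb t ht
    have hpow : t ^ (2*α) * t^(1-2*α) = t := by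
      rw [← Real.rpow_add ht0, show 2*α+(1-2*α) = (1:ℝ) by ring, Real.rpow_one]
    calc cρ * t = cρ * (t ^ (2*α) * t^(1-2*α)) := by rw [hpow]
      _ = t ^ (2*α) * (cρ * t^(1-2*α)) := by ring
      _ ≤ r t * ρ t := by
          apply mul_le_mul h1 h2 (by positivity) (le_trans (by positivity) h1)
  -- lower bound on s
  set m := min (1/2 : ℝ) (cρ/4) with hmdef
  have hm : 0 < m := lt_min (by norm_num) (by linarith)
  have hslb : ∀ x : ℝ, 2 ≤ x → m * x ≤ s x := by
    intro x hx
    obtain ⟨hsx, hsi⟩ := hs x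
    by_cases hc : x/2 < s x
    · calc m * x ≤ (1/2) * x := by
            apply mul_le_mul_of_nonneg_right (min_le_left _ _) (by linarith)
        _ ≤ s x := by linarith
    · push_neg at hc
      set a := x - s x with ha
      set b := x + s x with hb
      have hax : x/2 ≤ a := by rw [ha]; linarith
      have ha1 : (1:ℝ) ≤ a := by linarith
      have hab : a ≤ b := by rw [ha, hb]; linarith
      have hII : IntervalIntegrable (fun t => 1 / (r t * ρ t)) volume a b := by
        by_contra h
        rw [intervalIntegral.integral_undef h] at hsi
        norm_num at hsi
      have hca : (0:ℝ) < cρ * a := by positivity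
      have hbd : ∫ t in a..b, 1 / (r t * ρ t) ≤ ∫ t in a..b, 1/(cρ * a) := by
        apply intervalIntegral.integral_mono_on hab hII intervalIntegrable_const
        intro t ht
        have ht1 : (1:ℝ) ≤ t := le_trans ha1 ht.1
        have h3 : cρ * a ≤ r t * ρ t :=
          le_trans (mul_le_mul_of_nonneg_left (le_trans ht.1 le_rfl) hcρ.le) (hrρ t ht1)
        exact one_div_le_one_div_of_le hca h3
      rw [hsi, intervalIntegral.integral_const, smul_eq_mul] at hbd
      have hba : b - a = 2 * s x := by rw [ha, hb]; ring
      rw [hba] at hbd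
      -- 1 ≤ 2 s x / (cρ a)  ⟹  cρ a ≤ 2 s x ⟹ s x ≥ cρ x / 4
      have h4 : cρ * a ≤ 2 * s x := by
        rw [mul_one_div] at hbd
        calc cρ * a = 1 * (cρ * a) := (one_mul _).symm
          _ ≤ (2 * s x / (cρ * a)) * (cρ * a) := by
              apply mul_le_mul_of_nonneg_right hbd hca.le
          _ = 2 * s x := by field_simp
      have h5 : cρ * (x/2) ≤ 2 * s x := le_trans (mul_le_mul_of_nonneg_left hax hcρ.le) h4
      calc m * x ≤ (cρ/4) * x := mul_le_mul_of_nonneg_right (min_le_right _ _) (by linarith)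
        _ ≤ s x := by linarith
  -- conclusion
  intro C
  have h22 : (0:ℝ) < 2 - 2*α := by linarith
  have hK : (0:ℝ) < cρ * m := by positivity
  have htend : Tendsto (fun x : ℝ => x ^ (2-2*α)) atTop atTop := tendsto_rpow_atTop h22
  obtain ⟨x, hx⟩ := ((htend.eventually_gt_atTop (C / (cρ * m))).and (eventually_ge_atTop (2:ℝ))).exists
  obtain ⟨hxC, hx2⟩ := hx
  refine ⟨x, ?_⟩
  have hx1 : (1:ℝ) ≤ x := by linarith
  have hx0 : (0:ℝ) < x := by linarith
  have hprod : cρ * m * x^(2-2*α) ≤ ρ x * s x := by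
    calc cρ * m * x^(2-2*α) = (cρ * x^(1-2*α)) * (m * x) := by
          rw [show (2-2*α : ℝ) = (1-2*α) + 1 by ring, Real.rpow_add hx0, Real.rpow_one]
          ring
      _ ≤ ρ x * s x := by
          apply mul_le_mul (hρlb x hx1) (hslb x hx2) (by positivity)
          exact le_trans (by positivity) (hρlb x hx1)
  calc C = (C / (cρ * m)) * (cρ * m) := by field_simp
    _ < x^(2-2*α) * (cρ * m) := by
        apply mul_lt_mul_of_pos_right hxC hK
    _ = cρ * m * x^(2-2*α) := by ring
    _ ≤ ρ x * s x := hprod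
end

section
/- Suppose {u, v} is a PFSS of (r z')' = q z, {u₁, v₁} is a PFSS of (r z')' = q₁ z, and there is a solution û of the first equation with û(x)/u₁(x) → 1 as x → ∞. If moreover û = α u + β v for constants α, β, then β = 0 and α > 0; consequently u(x)/u₁(x) → 1/α and ρ(x)/ρ₁(x) → 1 as x → ∞, where ρ = uv, ρ₁ = u₁v₁. -/
open MeasureTheory Filter Set intervalIntegral

lemma quotDeriv {r u v : ℝ → ℝ} (hr : ∀ x, 0 < r x)
    (hu : Differentiable ℝ u) (hv : Differentiable ℝ v)
    (hupos : ∀ x, 0 < u x)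
    (hW : ∀ x, r x * (deriv v x * u x - deriv u x * v x) = 1) (x : ℝ) :
    HasDerivAt (fun y => v y / u y) ((r x * u x ^ 2)⁻¹) x := by
  have h := ((hv x).hasDerivAt).div ((hu x).hasDerivAt) (hupos x).ne'
  refine h.congr_deriv (Eq.symm ?_)
  have hrx := (hr x).ne'
  have hux := (hupos x).ne'
  field_simp
  linear_combination (-1) * hW x

lemma quotDeriv' {r u v : ℝ → ℝ} (hr : ∀ x, 0 < r x)
    (hu : Differentiable ℝ u) (hv : Differentiable ℝ v)
    (hvpos : ∀ x, 0 < v x)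
    (hW : ∀ x, r x * (deriv v x * u x - deriv u x * v x) = 1) (x : ℝ) :
    HasDerivAt (fun y => u y / v y) (-(r x * v x ^ 2)⁻¹) x := by
  have h := ((hu x).hasDerivAt).div ((hv x).hasDerivAt) (hvpos x).ne'
  refine h.congr_deriv (Eq.symm ?_)
  have hrx := (hr x).ne'
  have hvx := (hvpos x).ne'
  field_simp
  linear_combination hW x

lemma myftc {F f : ℝ → ℝ} (hF : ∀ x, HasDerivAt F (f x) x) (hf : Continuous f)
    (a b : ℝ) : ∫ t in a..b, f t = F b - F a :=
  intervalIntegral.integral_eq_sub_of_hasDerivAt (fun t _ => hF t)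
    (hf.intervalIntegrable a b)

lemma stolz {F G f g : ℝ → ℝ} (hF : ∀ x, HasDerivAt F (f x) x)
    (hG : ∀ x, HasDerivAt G (g x) x) (hg : ∀ x, 0 < g x)
    (hGtop : Tendsto G atTop atTop) {L : ℝ}
    (hfg : Tendsto (fun x => f x / g x) atTop (nhds L)) :
    Tendsto (fun x => F x / G x) atTop (nhds L) := by
  have hFd : Differentiable ℝ F := fun y => (hF y).differentiableAt
  have hGd : Differentiable ℝ G := fun y => (hG y).differentiableAt
  rw [Metric.tendsto_nhds]
  intro ε hε
  have hε3 : 0 < ε / 3 := by linarith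
  have h1 : ∀ᶠ x in atTop, dist (f x / g x) L < ε / 3 :=
    Metric.tendsto_nhds.mp hfg (ε / 3) hε3
  simp only [Real.dist_eq] at h1 ⊢
  obtain ⟨N, hN⟩ := eventually_atTop.mp h1
  have hub : ∀ y, N ≤ y → f y ≤ (L + ε / 3) * g y := by
    intro y hy
    have h0 := abs_sub_lt_iff.mp (hN y hy)
    have h2 : f y / g y < L + ε / 3 := by linarith [h0.1]
    have := (div_lt_iff₀ (hg y)).mp h2
    nlinarith [hg y]
  have hlb : ∀ y, N ≤ y → (L - ε / 3) * g y ≤ f y := by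
    intro y hy
    have h0 := abs_sub_lt_iff.mp (hN y hy)
    have h2 : L - ε / 3 < f y / g y := by linarith [h0.2]
    have := (lt_div_iff₀ (hg y)).mp h2
    nlinarith
  have hmono1 : MonotoneOn (fun y => (L + ε / 3) * G y - F y) (Ici N) := by
    apply monotoneOn_of_deriv_nonneg (convex_Ici N)
    · exact ((hGd.const_mul _).sub hFd).continuous.continuousOn
    · exact ((hGd.const_mul _).sub hFd).differentiableOn
    · intro y hy
      rw [interior_Ici] at hy
      have hd : HasDerivAt (fun y => (L + ε / 3) * G y - F y)
          ((L + ε / 3) * g y - f y) y := ((hG y).const_mul _).sub (hF y)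
      rw [hd.deriv]
      linarith [hub y hy.le]
  have hmono2 : MonotoneOn (fun y => F y - (L - ε / 3) * G y) (Ici N) := by
    apply monotoneOn_of_deriv_nonneg (convex_Ici N)
    · exact (hFd.sub (hGd.const_mul _)).continuous.continuousOn
    · exact (hFd.sub (hGd.const_mul _)).differentiableOn
    · intro y hy
      rw [interior_Ici] at hy
      have hd : HasDerivAt (fun y => F y - (L - ε / 3) * G y)
          (f y - (L - ε / 3) * g y) y := (hF y).sub ((hG y).const_mul _)
      rw [hd.deriv]
      linarith [hlb y hy.le]
  set A : ℝ := max |F N - (L + ε / 3) * G N| |F N - (L - ε / 3) * G N| with hA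
  have hAnn : 0 ≤ A := le_trans (abs_nonneg _) (le_max_left _ _)
  filter_upwards [eventually_ge_atTop N, hGtop.eventually_gt_atTop 0,
    hGtop.eventually_gt_atTop (3 * A / ε)] with x hx hGx hGA
  have hAx : A < ε / 3 * G x := by
    have := (div_lt_iff₀ hε).mp hGA
    linarith
  have m1 := hmono1 (self_mem_Ici) (mem_Ici.mpr hx) hx
  have m2 := hmono2 (self_mem_Ici) (mem_Ici.mpr hx) hx
  simp only at m1 m2
  have hA1 : F N - (L + ε / 3) * G N ≤ A := le_trans (le_abs_self _) (le_max_left _ _)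
  have hA2 : -A ≤ F N - (L - ε / 3) * G N := by
    have : |F N - (L - ε / 3) * G N| ≤ A := le_max_right _ _
    linarith [neg_abs_le (F N - (L - ε / 3) * G N)]
  rw [abs_sub_lt_iff]
  constructor
  · rw [div_sub' hGx.ne', div_lt_iff₀ hGx]
    nlinarith [mul_pos hε hGx]
  · rw [sub_div' hGx.ne', div_lt_iff₀ hGx]
    nlinarith [mul_pos hε hGx]

theorem stmt19 (r q q₁ u v u₁ v₁ uhat : ℝ → ℝ) (hrc : Continuous r)
    (hqc : Continuous q) (hq₁c : Continuous q₁) (hr : ∀ x, 0 < r x)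
    (h : IsPFSS r q u v) (h₁ : IsPFSS r q₁ u₁ v₁) (huhat : IsSol r q uhat)
    (hlim : Tendsto (fun x => uhat x / u₁ x) atTop (nhds 1))
    (α β : ℝ) (hαβ : ∀ x, uhat x = α * u x + β * v x) :
    β = 0 ∧ 0 < α ∧ Tendsto (fun x => u x / u₁ x) atTop (nhds α⁻¹) ∧
    Tendsto (fun x => (u x * v x) / (u₁ x * v₁ x)) atTop (nhds 1) := by
  obtain ⟨hsolu, hsolv, hup, hvp, hu', hv', hW, huv0, -⟩ := h
  obtain ⟨hsolu₁, hsolv₁, hu₁p, hv₁p, hu₁', hv₁', hW₁, hu₁v₁0, -⟩ := h₁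
  have hud : Differentiable ℝ u := hsolu.1
  have hvd : Differentiable ℝ v := hsolv.1
  have hu₁d : Differentiable ℝ u₁ := hsolu₁.1
  have hv₁d : Differentiable ℝ v₁ := hsolv₁.1
  have hvmono : Monotone v := monotone_of_deriv_nonneg hvd hv'
  have hu₁anti : Antitone u₁ := antitone_of_deriv_nonpos hu₁d hu₁'
  -- the two basic integrands
  set g₁ : ℝ → ℝ := fun t => (r t * u₁ t ^ 2)⁻¹ with hg₁def
  set gv : ℝ → ℝ := fun t => (r t * v t ^ 2)⁻¹ with hgvdef
  have hg₁c : Continuous g₁ :=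
    (hrc.mul ((hu₁d.continuous).pow 2)).inv₀ fun t =>
      (mul_pos (hr t) (pow_pos (hu₁p t) 2)).ne'
  have hgvc : Continuous gv :=
    (hrc.mul ((hvd.continuous).pow 2)).inv₀ fun t =>
      (mul_pos (hr t) (pow_pos (hvp t) 2)).ne'
  have hg₁pos : ∀ t, 0 < g₁ t := fun t =>
    inv_pos.mpr (mul_pos (hr t) (pow_pos (hu₁p t) 2))
  have hgvpos : ∀ t, 0 < gv t := fun t =>
    inv_pos.mpr (mul_pos (hr t) (pow_pos (hvp t) 2))
  -- FTC representations
  have hD₁ : ∀ x, HasDerivAt (fun y => v₁ y / u₁ y) (g₁ x) x :=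
    quotDeriv hr hu₁d hv₁d hu₁p hW₁
  have hDuv : ∀ x, HasDerivAt (fun y => u y / v y) (-(gv x)) x :=
    quotDeriv' hr hud hvd hvp hW
  have hI₁ : ∀ x : ℝ, ∫ t in (0:ℝ)..x, g₁ t = v₁ x / u₁ x - v₁ 0 / u₁ 0 :=
    fun x => myftc hD₁ hg₁c 0 x
  have hIv : ∀ x : ℝ, ∫ t in (0:ℝ)..x, gv t = u 0 / v 0 - u x / v x := by
    intro x
    have := myftc hDuv (hgvc.neg) 0 x
    rw [intervalIntegral.integral_neg] at this
    linarith
  -- the first-kind integral for {u₁,v₁} tends to ∞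
  have hv₁u₁top : Tendsto (fun x => v₁ x / u₁ x) atTop atTop := by
    have h0 : Tendsto (fun x => u₁ x / v₁ x) atTop (nhdsWithin 0 (Set.Ioi 0)) := by
      apply tendsto_nhdsWithin_of_tendsto_nhds_of_eventually_within _ hu₁v₁0
      filter_upwards with x
      exact div_pos (hu₁p x) (hv₁p x)
    have := h0.inv_tendsto_nhdsGT_zero
    apply this.congr
    intro x
    simp [inv_div]
  have hI₁top : Tendsto (fun x => ∫ t in (0:ℝ)..x, g₁ t) atTop atTop := by
    have := hv₁u₁top.atTop_add (tendsto_const_nhds (x := -(v₁ 0 / u₁ 0)))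
    apply this.congr
    intro x
    rw [hI₁ x]; ring
  -- the second-kind integral for {u,v} is bounded
  have hIvbd : ∀ x : ℝ, ∫ t in (0:ℝ)..x, gv t ≤ u 0 / v 0 := by
    intro x
    rw [hIv x]
    have := div_pos (hup x) (hvp x)
    linarith
  -- eventually uhat is positive
  have hpos : ∀ᶠ x in atTop, 0 < uhat x := by
    have h2 : ∀ᶠ x in atTop, (1:ℝ)/2 < uhat x / u₁ x :=
      hlim.eventually (eventually_gt_nhds (by norm_num))
    filter_upwards [h2] with x hx
    have h3 := hu₁p x
    have : uhat x = uhat x / u₁ x * u₁ x := (div_mul_cancel₀ _ h3.ne').symm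
    nlinarith
  -- β = 0
  have hβ0 : β = 0 := by
    by_contra hβ
    have l1 : Tendsto (fun x => uhat x / v x) atTop (nhds β) := by
      have heq : ∀ x, uhat x / v x = α * (u x / v x) + β := by
        intro x
        rw [hαβ x]
        field_simp [(hvp x).ne']
      have := (huv0.const_mul α).add_const β
      rw [mul_zero, zero_add] at this
      exact this.congr fun x => (heq x).symm
    have l2 : Tendsto (fun x => u₁ x / v x) atTop (nhds β) := by
      have hd := l1.div hlim one_ne_zero
      rw [div_one] at hd
      apply hd.congr'
      filter_upwards [hpos] with x hx
      have h3 := (hu₁p x).ne'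
      have h4 := (hvp x).ne'
      show uhat x / v x / (uhat x / u₁ x) = u₁ x / v x
      field_simp
    have hβpos : 0 < β := by
      have hge : 0 ≤ β :=
        ge_of_tendsto' l2 fun x => (div_pos (hu₁p x) (hvp x)).le
      exact hge.lt_of_ne (Ne.symm hβ)
    obtain ⟨N₀, hN₀⟩ := eventually_atTop.mp
      (l2.eventually (eventually_gt_nhds (half_lt_self hβpos)))
    set N : ℝ := max N₀ 0 with hNdef
    have hN0 : (0:ℝ) ≤ N := le_max_right _ _
    set c : ℝ := β / 2 * v 0 with hcdef
    set C : ℝ := 2 / β * u₁ 0 with hCdef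
    have hc : 0 < c := by
      have := hvp 0; positivity
    have hC : 0 < C := by
      have := hu₁p 0; positivity
    have hb1 : ∀ t, N ≤ t → c ≤ u₁ t := by
      intro t ht
      have h1 := hN₀ t (le_trans (le_max_left _ _) ht)
      rw [lt_div_iff₀ (hvp t)] at h1
      have h2 : v 0 ≤ v t := hvmono (le_trans hN0 ht)
      nlinarith [hvp 0]
    have hb2 : ∀ t, N ≤ t → v t ≤ C := by
      intro t ht
      have h1 := hN₀ t (le_trans (le_max_left _ _) ht)
      rw [lt_div_iff₀ (hvp t)] at h1
      have h2 : u₁ t ≤ u₁ 0 := hu₁anti (le_trans hN0 ht)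
      rw [hCdef]
      rw [div_mul_eq_mul_div, le_div_iff₀ hβpos]
      nlinarith
    set K : ℝ := (C / c) ^ 2 with hKdef
    have hK : 0 < K := by positivity
    have hptwise : ∀ x, N ≤ x → ∀ t ∈ Icc N x, g₁ t ≤ K * gv t := by
      intro x hx t ht
      have ht1 : c ≤ u₁ t := hb1 t ht.1
      have ht2 : v t ≤ C := hb2 t ht.1
      have hrt := hr t
      have hu₁t := hu₁p t
      have hvt := hvp t
      have key : r t * v t ^ 2 ≤ (r t * u₁ t ^ 2) * K := by
        have hvc : v t ≤ C / c * u₁ t := by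
          have : C = C / c * c := by field_simp
          calc v t ≤ C := ht2
            _ = C / c * c := this
            _ ≤ C / c * u₁ t := by
                apply mul_le_mul_of_nonneg_left ht1 (by positivity)
        have h5 : v t ^ 2 ≤ (C / c) ^ 2 * u₁ t ^ 2 := by
          have hv0 : 0 ≤ v t := hvt.le
          nlinarith
        rw [hKdef]; nlinarith
      have hX : 0 < r t * v t ^ 2 := by positivity
      have hY : 0 < r t * u₁ t ^ 2 := by positivity
      show (r t * u₁ t ^ 2)⁻¹ ≤ K * (r t * v t ^ 2)⁻¹
      rw [← div_eq_mul_inv, le_div_iff₀ hX, inv_mul_le_iff₀ hY]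
      linarith
    -- bound the integral ∫_0^x g₁ for x ≥ N
    have hbound : ∀ x, N ≤ x →
        (∫ t in (0:ℝ)..x, g₁ t) ≤ (∫ t in (0:ℝ)..N, g₁ t) + K * (u 0 / v 0) := by
      intro x hx
      have i1 : IntervalIntegrable g₁ volume 0 N := hg₁c.intervalIntegrable _ _
      have i2 : IntervalIntegrable g₁ volume N x := hg₁c.intervalIntegrable _ _
      have i3 : IntervalIntegrable gv volume N x := hgvc.intervalIntegrable _ _
      have i4 : IntervalIntegrable (fun t => K * gv t) volume N x :=
        (hgvc.const_smul K).intervalIntegrable _ _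
      have hsplit : (∫ t in (0:ℝ)..x, g₁ t)
          = (∫ t in (0:ℝ)..N, g₁ t) + ∫ t in N..x, g₁ t :=
        (intervalIntegral.integral_add_adjacent_intervals i1 i2).symm
      have hm : (∫ t in N..x, g₁ t) ≤ ∫ t in N..x, K * gv t :=
        intervalIntegral.integral_mono_on hx i2 i4 (hptwise x hx)
      have hKint : (∫ t in N..x, K * gv t) = K * ∫ t in N..x, gv t :=
        intervalIntegral.integral_const_mul _ _
      have hvsplit : (∫ t in (0:ℝ)..x, gv t)
          = (∫ t in (0:ℝ)..N, gv t) + ∫ t in N..x, gv t :=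
        (intervalIntegral.integral_add_adjacent_intervals
          (hgvc.intervalIntegrable _ _) i3).symm
      have hnn : 0 ≤ ∫ t in (0:ℝ)..N, gv t :=
        intervalIntegral.integral_nonneg hN0 fun t _ => (hgvpos t).le
      have h6 : (∫ t in N..x, gv t) ≤ u 0 / v 0 := by
        have := hIvbd x
        linarith
      have h7 : K * (∫ t in N..x, gv t) ≤ K * (u 0 / v 0) :=
        mul_le_mul_of_nonneg_left h6 hK.le
      linarith
    -- contradiction
    obtain ⟨x, hx1, hx2⟩ := ((hI₁top.eventually_gt_atTop
      ((∫ t in (0:ℝ)..N, g₁ t) + K * (u 0 / v 0))).and (eventually_ge_atTop N)).exists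
    exact absurd (hbound x hx2) (not_le.mpr hx1)
  subst hβ0
  -- now uhat = α u
  have hαlim : Tendsto (fun x => α * (u x / u₁ x)) atTop (nhds 1) := by
    apply hlim.congr
    intro x
    rw [hαβ x]
    field_simp [(hu₁p x).ne']
    ring
  have hα : 0 < α := by
    by_contra hα
    push_neg at hα
    have : (1:ℝ) ≤ 0 := le_of_tendsto' hαlim fun x =>
      mul_nonpos_of_nonpos_of_nonneg hα (div_pos (hup x) (hu₁p x)).le
    linarith
  have huu₁ : Tendsto (fun x => u x / u₁ x) atTop (nhds α⁻¹) := by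
    have := hαlim.const_mul α⁻¹
    rw [mul_one] at this
    apply this.congr
    intro x
    rw [inv_mul_cancel_left₀ hα.ne']
  refine ⟨rfl, hα, huu₁, ?_⟩
  -- Stolz part
  have hu₁u : Tendsto (fun x => u₁ x / u x) atTop (nhds α) := by
    have := huu₁.inv₀ (inv_ne_zero hα.ne')
    rw [inv_inv] at this
    apply this.congr
    intro x
    rw [inv_div]
  set f : ℝ → ℝ := fun t => (r t * u t ^ 2)⁻¹ with hfdef
  have hDF : ∀ x, HasDerivAt (fun y => v y / u y) (f x) x :=
    quotDeriv hr hud hvd hup hW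
  have hratio : Tendsto (fun x => f x / g₁ x) atTop (nhds (α ^ 2)) := by
    have hsq : Tendsto (fun x => (u₁ x / u x) ^ 2) atTop (nhds (α ^ 2)) :=
      hu₁u.pow 2
    apply hsq.congr
    intro x
    have h1 := (hr x).ne'
    have h2 := (hup x).ne'
    have h3 := (hu₁p x).ne'
    show (u₁ x / u x) ^ 2 = (r x * u x ^ 2)⁻¹ / (r x * u₁ x ^ 2)⁻¹
    field_simp
  have hstolz : Tendsto (fun x => (v x / u x) / (v₁ x / u₁ x)) atTop (nhds (α ^ 2)) :=
    stolz hDF hD₁ hg₁pos hv₁u₁top hratio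
  have hfinal := (huu₁.pow 2).mul hstolz
  have hval : (α⁻¹) ^ 2 * α ^ 2 = 1 := by
    field_simp
  rw [hval] at hfinal
  apply hfinal.congr
  intro x
  have h2 := (hup x).ne'
  have h3 := (hu₁p x).ne'
  have h4 := (hvp x).ne'
  have h5 := (hv₁p x).ne'
  field_simp
end
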